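/- arXiv:2105.06862 — 5 statements merged into one kernel-verified Lean document; each statement's English description precedes it below -/
import Mathlib

section
/- Let r, k ∈ ℤ with 0 ≤ k ≤ r and suppose Assumption A1 holds. Then there is a constant κ_{r,k} > 0, depending only on r, k, d and the reference integrator Î but not on the interval, such that for every interval I_n = (t_{n−1}, t_n] of length τ_n and every φ ∈ P_r(I_n, ℝ^d): ∫_{I_n} ‖φ'(t)‖ dt ≤ τ_n · sup_{t∈I_n} ‖φ'(t)‖ ≤ κ_{r,k} ( Σ_{i=1}^{⌊(k−1)/2⌋} (τ_n/2)^i ‖φ^{(i)}(t_{n−1}^+)‖ + Σ_{i=1}^{⌊k/2⌋} (τ_n/2)^i ‖φ^{(i)}(t_n^-)‖ + Σ_{i=δ_{0,k}}^{r−k} ‖I_n[φ'(t)·(1+T_n^{−1}(t))^i]‖ ), and moreover sup_{t∈I_n} ‖φ(t)‖ ≤ min{‖φ(t_{n−1}^+)‖, ‖φ(t_n^-)‖} + ∫_{I_n} ‖φ'(t)‖ dt. -/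
open Set MeasureTheory
open scoped BigOperators RealInnerProductSpace

noncomputable section

/-- `ℝ^d` with the Euclidean norm. -/
abbrev Vec (d : ℕ) := EuclideanSpace ℝ (Fin d)

/-- `φ : ℝ → ℝ` is (the evaluation of) a polynomial of degree at most `s`
(`s : ℤ`; for `s < 0` this means the zero function). -/
def IsPolyR (s : ℤ) (φ : ℝ → ℝ) : Prop :=
  ∃ p : Polynomial ℝ, (∀ n : ℕ, s < (n : ℤ) → p.coeff n = 0) ∧ ∀ x : ℝ, φ x = p.eval x

/-- Vector-valued polynomials of degree at most `s`, componentwise. -/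
def IsPolyV {d : ℕ} (s : ℤ) (φ : ℝ → Vec d) : Prop :=
  ∀ i : Fin d, IsPolyR s fun x => φ x i

/-- Componentwise application of a (reference) integrator to a vector-valued function. -/
def vecI {d : ℕ} (Ih : (ℝ → ℝ) →ₗ[ℝ] ℝ) (φ : ℝ → Vec d) : Vec d :=
  WithLp.toLp 2 (fun i => Ih fun x => φ x i)

/-- Componentwise application of a (reference) approximation operator. -/
def vecOp {d : ℕ} (Ic : (ℝ → ℝ) →ₗ[ℝ] (ℝ → ℝ)) (φ : ℝ → Vec d) : ℝ → Vec d :=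
  fun x => WithLp.toLp 2 (fun i => Ic (fun y => φ y i) x)

/-- Affine map of the reference interval `(-1,1]` onto `(a,b]`. -/
def Tmap (a b x : ℝ) : ℝ := (a + b) / 2 + (b - a) / 2 * x

/-- Inverse of `Tmap a b`. -/
def Tinv (a b x : ℝ) : ℝ := (2 * x - (a + b)) / (b - a)

/-- Local (vector-valued) integrator `I_n` on `(a,b]`. -/
def locI {d : ℕ} (Ih : (ℝ → ℝ) →ₗ[ℝ] ℝ) (a b : ℝ) (φ : ℝ → Vec d) : Vec d :=
  ((b - a) / 2) • vecI Ih (φ ∘ Tmap a b)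

/-- Local scalar integrator on `(a,b]`. -/
def locIs (Ih : (ℝ → ℝ) →ₗ[ℝ] ℝ) (a b : ℝ) (g : ℝ → ℝ) : ℝ :=
  (b - a) / 2 * Ih (g ∘ Tmap a b)

/-- Local approximation operator `ℐ_n` on `(a,b]` (vector-valued). -/
def locOp {d : ℕ} (Ic : (ℝ → ℝ) →ₗ[ℝ] (ℝ → ℝ)) (a b : ℝ) (φ : ℝ → Vec d) : ℝ → Vec d :=
  fun x => vecOp Ic (φ ∘ Tmap a b) (Tinv a b x)

/-- Local approximation operator `ℐ_n` on `(a,b]` (scalar). -/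
def locOpR (Ic : (ℝ → ℝ) →ₗ[ℝ] (ℝ → ℝ)) (a b : ℝ) (φ : ℝ → ℝ) : ℝ → ℝ :=
  fun x => Ic (φ ∘ Tmap a b) (Tinv a b x)

/-- Supremum of the (Euclidean) norm over a set of times. -/
def supNorm {d : ℕ} (s : Set ℝ) (φ : ℝ → Vec d) : ℝ := ⨆ x : s, ‖φ (x : ℝ)‖

/-- Supremum of the absolute value over a set of times. -/
def supAbs (s : Set ℝ) (g : ℝ → ℝ) : ℝ := ⨆ x : s, |g (x : ℝ)|

/-- `k_𝒥 = max{⌊k/2⌋ − 1, k_𝓘, k_ℐ}`. -/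
def kJ (k : ℤ) (kI kIc : ℕ) : ℕ := max (max (k.fdiv 2 - 1).toNat kI) kIc

/-- Assumption A1 on the reference integrator. -/
def AssumptionA1 (Ih : (ℝ → ℝ) →ₗ[ℝ] ℝ) (r k : ℤ) : Prop :=
  ∀ ψ : ℝ → ℝ, IsPolyR (r - max 1 k) ψ →
    (∀ φ : ℝ → ℝ, IsPolyR (r - max 1 k) φ →
      Ih (fun x => (1 - x) ^ (k.fdiv 2).toNat * (1 + x) ^ ((k - 1).fdiv 2).natAbs *
        (ψ x * φ x)) = 0) →
    ∀ x : ℝ, ψ x = 0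

/-- Assumption A2 on the reference integrator. -/
def AssumptionA2 (d : ℕ) (Ih : (ℝ → ℝ) →ₗ[ℝ] ℝ) (kI : ℕ) (C0 : ℝ) : Prop :=
  ∀ φ : ℝ → Vec d, ContDiffOn ℝ (kI : ℕ∞) φ (Icc (-1 : ℝ) 1) →
    ‖vecI Ih φ‖ ≤ C0 * ∑ j ∈ Finset.range (kI + 1),
      supNorm (Icc (-1 : ℝ) 1) (iteratedDerivWithin j φ (Icc (-1 : ℝ) 1))

/-- Assumption A3 on the reference approximation operator. -/
def AssumptionA3 (d : ℕ) (Ic : (ℝ → ℝ) →ₗ[ℝ] (ℝ → ℝ)) (kI kIc : ℕ) (C1 : ℝ) : Prop :=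
  ∀ l : ℕ, l ≤ kI → ∀ φ : ℝ → Vec d,
    ContDiffOn ℝ ((max kIc l : ℕ) : ℕ∞) φ (Icc (-1 : ℝ) 1) →
    supNorm (Icc (-1 : ℝ) 1) (iteratedDerivWithin l (vecOp Ic φ) (Icc (-1 : ℝ) 1)) ≤
      C1 * ∑ j ∈ Finset.range (max kIc l + 1),
        supNorm (Icc (-1 : ℝ) 1) (iteratedDerivWithin j φ (Icc (-1 : ℝ) 1))

/-- Assumption A4, with smoothness level `m` playing the role of `k_𝒥`. -/
def AssumptionA4 (d : ℕ) (f : ℝ → Vec d → Vec d) (t0 T C2 : ℝ) (m : ℕ) : Prop :=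
  ∀ i : ℕ, i ≤ m → ∀ v w : ℝ → Vec d, ContDiff ℝ (⊤ : ℕ∞) v → ContDiff ℝ (⊤ : ℕ∞) w →
    ∀ᵐ s ∂(volume.restrict (Icc t0 (t0 + T))),
      ‖iteratedDeriv i (fun x => f x (v x) - f x (w x)) s‖ ≤
        C2 * ∑ l ∈ Finset.range (i + 1), ‖iteratedDeriv l (fun x => v x - w x) s‖

/-- Assumption A5a, stated for all local intervals. -/
def AssumptionA5a (d : ℕ) (Ic : (ℝ → ℝ) →ₗ[ℝ] (ℝ → ℝ)) (kI kIc : ℕ)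
    (K : ℕ) (th : Fin (K + 1) → ℝ) (Kt : Fin (K + 1) → ℕ) (C11 C12 : ℝ) : Prop :=
  Function.Injective th ∧ (∀ m, th m ∈ Icc (-1 : ℝ) 1) ∧
  ∀ a b : ℝ, a < b → b - a ≤ 1 → ∀ l : ℕ, l ≤ kI →
    ∀ φ : ℝ → Vec d, ContDiffOn ℝ (kIc : ℕ∞) φ (Icc a b) →
      ContDiffOn ℝ (l : ℕ∞) (locOp Ic a b φ) (Icc a b) ∧
      ((b - a) / 2) ^ l *
          supNorm (Ioc a b) (iteratedDerivWithin l (locOp Ic a b φ) (Icc a b)) ≤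
        C11 * ∑ m : Fin (K + 1), ∑ j ∈ Finset.range (Kt m + 1),
            ((b - a) / 2) ^ j *
              ‖iteratedDerivWithin j φ (Icc a b) (Tmap a b (th m))‖ +
        C12 * supNorm (Ioc a b) φ

/-- The conditions defining `Ĵ v` on the reference interval. -/
def JCondRef (Ih : (ℝ → ℝ) →ₗ[ℝ] ℝ) (Ic : (ℝ → ℝ) →ₗ[ℝ] (ℝ → ℝ)) (r k : ℤ)
    (v w : ℝ → ℝ) : Prop :=
  IsPolyR r w ∧
  (1 ≤ k → ∀ i : ℕ, (i : ℤ) ≤ (k - 1).fdiv 2 →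
    iteratedDeriv i w (-1) = iteratedDerivWithin i v (Icc (-1 : ℝ) 1) (-1)) ∧
  (2 ≤ k → ∀ i : ℕ, 1 ≤ i → (i : ℤ) ≤ k.fdiv 2 →
    iteratedDeriv i w 1 = iteratedDerivWithin i v (Icc (-1 : ℝ) 1) 1) ∧
  (∀ φ : ℝ → ℝ, IsPolyR (r - k) φ →
    Ih (fun x => deriv w x * φ x) + (if k = 0 then w (-1) * φ (-1) else 0) =
    Ih (fun x => Ic (derivWithin v (Icc (-1 : ℝ) 1)) x * φ x) +
      (if k = 0 then v (-1) * φ (-1) else 0))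

/-- The conditions defining the local approximation `J_n v` on `(a,b]`. -/
def JCondLoc (d : ℕ) (Ih : (ℝ → ℝ) →ₗ[ℝ] ℝ) (Ic : (ℝ → ℝ) →ₗ[ℝ] (ℝ → ℝ)) (r k : ℤ)
    (a b : ℝ) (v w : ℝ → Vec d) : Prop :=
  IsPolyV r w ∧
  (1 ≤ k → ∀ i : ℕ, (i : ℤ) ≤ (k - 1).fdiv 2 →
    iteratedDeriv i w a = iteratedDerivWithin i v (Icc a b) a) ∧
  (2 ≤ k → ∀ i : ℕ, 1 ≤ i → (i : ℤ) ≤ k.fdiv 2 →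
    iteratedDeriv i w b = iteratedDerivWithin i v (Icc a b) b) ∧
  (∀ φ : ℝ → Vec d, IsPolyV (r - k) φ →
    locIs Ih a b (fun x => ⟪deriv w x, φ x⟫) +
        (if k = 0 then ⟪w a, φ a⟫ else 0) =
      locIs Ih a b (fun x => ⟪locOp Ic a b (derivWithin v (Icc a b)) x, φ x⟫) +
        (if k = 0 then ⟪v a, φ a⟫ else 0))

/-- The conditions defining `P̂ v` on the reference interval. -/
def PCondRef (Ih : (ℝ → ℝ) →ₗ[ℝ] ℝ) (Ic : (ℝ → ℝ) →ₗ[ℝ] (ℝ → ℝ)) (r k : ℤ)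
    (v w : ℝ → ℝ) : Prop :=
  IsPolyR (r - 1) w ∧
  (3 ≤ k → ∀ i : ℕ, (i : ℤ) ≤ (k - 1).fdiv 2 - 1 →
    iteratedDeriv i w (-1) = iteratedDerivWithin i v (Icc (-1 : ℝ) 1) (-1)) ∧
  (2 ≤ k → ∀ i : ℕ, (i : ℤ) ≤ k.fdiv 2 - 1 →
    iteratedDeriv i w 1 = iteratedDerivWithin i v (Icc (-1 : ℝ) 1) 1) ∧
  (∀ φ : ℝ → ℝ, IsPolyR (r - k) φ → (k = 0 → φ (-1) = 0) →
    Ih (fun x => w x * φ x) = Ih (fun x => Ic v x * φ x))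

/-- The conditions defining the local approximation `P_n v` on `(a,b]`. -/
def PCondLoc (d : ℕ) (Ih : (ℝ → ℝ) →ₗ[ℝ] ℝ) (Ic : (ℝ → ℝ) →ₗ[ℝ] (ℝ → ℝ)) (r k : ℤ)
    (a b : ℝ) (v w : ℝ → Vec d) : Prop :=
  IsPolyV (r - 1) w ∧
  (3 ≤ k → ∀ i : ℕ, (i : ℤ) ≤ (k - 1).fdiv 2 - 1 →
    iteratedDeriv i w a = iteratedDerivWithin i v (Icc a b) a) ∧
  (2 ≤ k → ∀ i : ℕ, (i : ℤ) ≤ k.fdiv 2 - 1 →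
    iteratedDeriv i w b = iteratedDerivWithin i v (Icc a b) b) ∧
  (∀ φ : ℝ → Vec d, IsPolyV (r - k) φ → (k = 0 → φ a = 0) →
    locIs Ih a b (fun x => ⟪w x, φ x⟫) =
      locIs Ih a b (fun x => ⟪locOp Ic a b v x, φ x⟫))

/-- The local variational time discretization problem on `(a,b]` with incoming value `Uprev`. -/
def LocalVTD (d : ℕ) (Ih : (ℝ → ℝ) →ₗ[ℝ] ℝ) (Ic : (ℝ → ℝ) →ₗ[ℝ] (ℝ → ℝ)) (r k : ℤ)
    (a b : ℝ) (f : ℝ → Vec d → Vec d) (Uprev : Vec d) (U : ℝ → Vec d) : Prop :=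
  IsPolyV r U ∧
  (1 ≤ k → U a = Uprev) ∧
  (2 ≤ k → ∀ i : ℕ, (i : ℤ) ≤ k.fdiv 2 - 1 →
    iteratedDeriv (i + 1) U b = iteratedDeriv i (fun s => f s (U s)) b) ∧
  (3 ≤ k → ∀ i : ℕ, (i : ℤ) ≤ (k - 1).fdiv 2 - 1 →
    iteratedDeriv (i + 1) U a = iteratedDeriv i (fun s => f s (U s)) a) ∧
  (∀ φ : ℝ → Vec d, IsPolyV (r - k) φ →
    locIs Ih a b (fun s => ⟪deriv U s, φ s⟫) +
        (if k = 0 then ⟪U a - Uprev, φ a⟫ else 0) =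
      locIs Ih a b (fun s => ⟪locOp Ic a b (fun x => f x (U x)) s, φ s⟫))

/-- The global discrete solution of the variational time discretization:
`P n` is the local polynomial on `I_n = (t_{n-1}, t_n]`. -/
def IsVTDSolution (d : ℕ) (Ih : (ℝ → ℝ) →ₗ[ℝ] ℝ) (Ic : (ℝ → ℝ) →ₗ[ℝ] (ℝ → ℝ))
    (r k : ℤ) (t : ℕ → ℝ) (N : ℕ) (f : ℝ → Vec d → Vec d) (u0 : Vec d)
    (P : ℕ → ℝ → Vec d) : Prop :=
  ∀ n : ℕ, 1 ≤ n → n ≤ N →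
    LocalVTD d Ih Ic r k (t (n - 1)) (t n) f
      (if n = 1 then u0 else P (n - 1) (t (n - 1))) (P n)

/-- Exactness of the local integrator on polynomials of degree at most `ρ`. -/
def QuadExact (Ih : (ℝ → ℝ) →ₗ[ℝ] ℝ) (a b : ℝ) (ρ : ℤ) : Prop :=
  ∀ φ : ℝ → ℝ, IsPolyR ρ φ → (∫ x in Ioc a b, φ x) = locIs Ih a b φ

/-- `I_n[φ ψ] = I_n[(ℐ_n φ) ψ]` for all `φ ∈ P_ρ` and `ψ ∈ P_i` (the property defining
`r^𝓘_{ℐ,i}`). -/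
def QuadInterpExact (Ih : (ℝ → ℝ) →ₗ[ℝ] ℝ) (Ic : (ℝ → ℝ) →ₗ[ℝ] (ℝ → ℝ))
    (a b : ℝ) (ρ : ℤ) (i : ℕ) : Prop :=
  ∀ φ : ℝ → ℝ, IsPolyR ρ φ → ∀ ψ : ℝ → ℝ, IsPolyR (i : ℤ) ψ →
    locIs Ih a b (fun x => φ x * ψ x) = locIs Ih a b (fun x => locOpR Ic a b φ x * ψ x)

/-- The defining interpolation conditions of the Hermite-type operator `𝓘ᵃᵖᵖ_n` on `(a,b]`. -/
def IsIapp (d : ℕ) (k : ℤ) (K : ℕ) (th : Fin (K + 1) → ℝ) (Kt : Fin (K + 1) → ℕ)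
    (a b : ℝ) (R : ℕ) (J : (ℝ → Vec d) → (ℝ → Vec d)) : Prop :=
  ∀ φ : ℝ → Vec d, ContDiff ℝ (⊤ : ℕ∞) φ →
    IsPolyV (R : ℤ) (J φ) ∧
    (∀ l : ℕ, (l : ℤ) ≤ k.fdiv 2 - 1 → iteratedDeriv l (J φ) b = iteratedDeriv l φ b) ∧
    (∀ l : ℕ, (l : ℤ) ≤ (k - 1).fdiv 2 - 1 →
      iteratedDeriv l (J φ) a = iteratedDeriv l φ a) ∧
    (∀ m : Fin (K + 1), ∀ l : ℕ, l ≤ Kt m →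
      iteratedDeriv l (J φ) (Tmap a b (th m)) = iteratedDeriv l φ (Tmap a b (th m)))

/-- Composition `ℐ¹ ∘ ⋯ ∘ ℐˡ` of a finite family of operators. -/
def compOps (l : ℕ) (Ops : Fin l → ((ℝ → ℝ) →ₗ[ℝ] (ℝ → ℝ))) : (ℝ → ℝ) → (ℝ → ℝ) :=
  (List.ofFn (fun j : Fin l => (Ops j : (ℝ → ℝ) → (ℝ → ℝ)))).foldr (· ∘ ·) id

section
open Polynomial

namespace VTD
def mkVec {d : ℕ} (v : Fin d → ℝ) : Vec d := WithLp.toLp 2 v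
def qpoly {d m : ℕ} (c : Fin d → Fin m → ℝ) (i : Fin d) : Polynomial ℝ :=
  ∑ j : Fin m, Polynomial.monomial (j : ℕ) (c i j)
def pev {d : ℕ} (q : Fin d → Polynomial ℝ) : ℝ → Vec d := fun x => mkVec fun i => (q i).eval x
def Pfun {d m : ℕ} (c : Fin d → Fin m → ℝ) : ℝ → Vec d := pev (qpoly c)

lemma Polynomial.contDiffAux (p : Polynomial ℝ) {n : ℕ∞} : ContDiff ℝ n (fun x : ℝ => p.eval x) := by
  have h : (fun x : ℝ => p.eval x)
      = fun x => ∑ i ∈ Finset.range (p.natDegree + 1), p.coeff i * x ^ i :=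
    funext fun x => p.eval_eq_sum_range x
  rw [h]
  exact ContDiff.sum fun i _ => contDiff_const.mul (contDiff_id.pow i)

lemma hasDerivAt_vec {d : ℕ} {f : ℝ → Vec d} {v : Fin d → ℝ} {x : ℝ}
    (h : ∀ i, HasDerivAt (fun y => f y i) (v i) x) : HasDerivAt f (mkVec v) x := by
  have h1 : HasDerivAt (fun y => (fun i => f y i : Fin d → ℝ)) v x := hasDerivAt_pi.2 h
  exact ((PiLp.continuousLinearEquiv 2 ℝ
    (fun _ : Fin d => ℝ)).symm.hasFDerivAt).comp_hasDerivAt x h1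

@[simp] lemma pev_apply {d : ℕ} (q : Fin d → Polynomial ℝ) (x : ℝ) (i : Fin d) :
    pev q x i = (q i).eval x := rfl

lemma pev_contDiff {d : ℕ} (q : Fin d → Polynomial ℝ) {n : ℕ∞} : ContDiff ℝ n (pev q) := by
  rw [contDiff_piLp]
  intro i
  exact Polynomial.contDiffAux (q i)

lemma pev_hasDerivAt {d : ℕ} (q : Fin d → Polynomial ℝ) (x : ℝ) :
    HasDerivAt (pev q) (pev (fun i => (q i).derivative) x) x :=
  hasDerivAt_vec fun i => (q i).hasDerivAt x

lemma pev_deriv {d : ℕ} (q : Fin d → Polynomial ℝ) :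
    deriv (pev q) = pev (fun i => (q i).derivative) :=
  funext fun x => (pev_hasDerivAt q x).deriv

lemma pev_iteratedDeriv {d : ℕ} (q : Fin d → Polynomial ℝ) (n : ℕ) :
    iteratedDeriv n (pev q) = pev (fun i => Polynomial.derivative^[n] (q i)) := by
  induction n with
  | zero => simp [pev]
  | succ n ih =>
      rw [iteratedDeriv_succ, ih, pev_deriv]
      have h : (fun i => (Polynomial.derivative^[n] (q i)).derivative)
          = fun i => Polynomial.derivative^[n + 1] (q i) :=
        funext fun i => (Function.iterate_succ_apply' Polynomial.derivative n (q i)).symm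
      rw [h]


def lin {d m : ℕ} (E : Fin m → ℝ) (c : Fin d → Fin m → ℝ) : Vec d :=
  mkVec fun i => ∑ j, c i j * E j

lemma lin_smul {d m : ℕ} (E : Fin m → ℝ) (s : ℝ) (c : Fin d → Fin m → ℝ) :
    lin E (s • c) = s • lin E c := by
  ext i
  simp only [lin, mkVec, PiLp.toLp_apply, PiLp.smul_apply, Pi.smul_apply, smul_eq_mul, Finset.mul_sum]
  apply Finset.sum_congr rfl
  intro j _
  ring

lemma lin_cont {d m : ℕ} (E : Fin m → ℝ) : Continuous (lin (d := d) E) := by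
  have h : Continuous fun c : Fin d → Fin m → ℝ => (fun i => ∑ j, c i j * E j : Fin d → ℝ) := by
    apply continuous_pi
    intro i
    apply continuous_finset_sum
    intro j _
    exact (by fun_prop : Continuous fun c : Fin d → Fin m → ℝ => c i j * E j)
  exact ((PiLp.continuousLinearEquiv 2 ℝ (fun _ : Fin d => ℝ)).symm.continuous).comp h

lemma qpoly_coeff_ge {d m : ℕ} (c : Fin d → Fin m → ℝ) (i : Fin d) {n : ℕ} (hn : m ≤ n) :
    (qpoly c i).coeff n = 0 := by
  rw [qpoly, finset_sum_coeff]
  apply Finset.sum_eq_zero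
  intro j _
  rw [coeff_monomial, if_neg (by omega)]

lemma qpoly_coeff_fin {d m : ℕ} (c : Fin d → Fin m → ℝ) (i : Fin d) (j : Fin m) :
    (qpoly c i).coeff (j : ℕ) = c i j := by
  rw [qpoly, finset_sum_coeff]
  rw [Finset.sum_eq_single j]
  · rw [coeff_monomial, if_pos rfl]
  · intro j' _ hj'
    rw [coeff_monomial, if_neg (fun h => hj' (Fin.ext h))]
  · intro h
    exact absurd (Finset.mem_univ j) h

lemma qpoly_itder {d m : ℕ} (c : Fin d → Fin m → ℝ) (i : Fin d) (n : ℕ) :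
    Polynomial.derivative^[n] (qpoly c i)
      = ∑ j : Fin m, c i j • Polynomial.derivative^[n] ((X : ℝ[X]) ^ (j : ℕ)) := by
  induction n with
  | zero =>
      simp only [Function.iterate_zero, id_eq, qpoly]
      apply Finset.sum_congr rfl
      intro j _
      rw [smul_X_eq_monomial]
  | succ n ih =>
      rw [Function.iterate_succ_apply', ih, derivative_sum]
      apply Finset.sum_congr rfl
      intro j _
      rw [derivative_smul, Function.iterate_succ_apply']

lemma rep_itder {d m : ℕ} (c : Fin d → Fin m → ℝ) (n : ℕ) (x : ℝ) :
    iteratedDeriv n (Pfun c) x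
      = lin (fun j => (Polynomial.derivative^[n] ((X : ℝ[X]) ^ (j : ℕ))).eval x) c := by
  rw [Pfun, pev_iteratedDeriv]
  ext i
  show (Polynomial.derivative^[n] (qpoly c i)).eval x = _
  rw [qpoly_itder, eval_finset_sum]
  apply Finset.sum_congr rfl
  intro j _
  rw [eval_smul, smul_eq_mul]

lemma Pfun_apply {d m : ℕ} (c : Fin d → Fin m → ℝ) (x : ℝ) (i : Fin d) :
    Pfun c x i = (qpoly c i).eval x := rfl

lemma rep_quad {d m : ℕ} (Ih : (ℝ → ℝ) →ₗ[ℝ] ℝ) (c : Fin d → Fin m → ℝ) (i : ℕ) :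
    vecI Ih (fun t => (1 + t) ^ i • Pfun c t)
      = lin (fun j => Ih (fun x => (1 + x) ^ i * x ^ (j : ℕ))) c := by
  ext i'
  show Ih (fun x => ((1 + x) ^ i • Pfun c x) i') = ∑ j, c i' j * Ih (fun x => (1 + x) ^ i * x ^ (j : ℕ))
  have hfn : (fun x => ((1 + x) ^ i • Pfun c x) i')
      = ∑ j : Fin m, c i' j • ((fun x => (1 + x) ^ i * x ^ (j : ℕ)) : ℝ → ℝ) := by
    funext x
    rw [Finset.sum_apply]
    have h1 : ((1 + x) ^ i • Pfun c x) i' = (1 + x) ^ i * (qpoly c i').eval x := rfl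
    rw [h1, qpoly, eval_finset_sum, Finset.mul_sum]
    apply Finset.sum_congr rfl
    intro j _
    simp only [eval_monomial, Pi.smul_apply, smul_eq_mul]
    ring
  rw [hfn, map_sum]
  apply Finset.sum_congr rfl
  intro j _
  rw [_root_.map_smul, smul_eq_mul]

/-- expansion of `Ih (w * φf)` in the basis `(1+x)^j`. -/
lemma expandIh (Ih : (ℝ → ℝ) →ₗ[ℝ] ℝ) (s : ℕ) (w : ℝ → ℝ) (pφ : Polynomial ℝ)
    (hdeg : pφ.natDegree ≤ s) :
    Ih (fun x => w x * pφ.eval x) =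
      ∑ j ∈ Finset.range (s + 1),
        (pφ.comp (X - C 1)).coeff j * Ih (fun x => (1 + x) ^ j * w x) := by
  set g := pφ.comp (X - C 1) with hg
  have hcomp : g.comp (X + C 1) = pφ := by
    rw [hg, comp_assoc]
    simp
  have hgdeg : g.natDegree < s + 1 := by
    have h2 := natDegree_comp_le (p := pφ) (q := X - C 1)
    rw [natDegree_X_sub_C, mul_one, ← hg] at h2
    omega
  have heval : ∀ x : ℝ, pφ.eval x = ∑ j ∈ Finset.range (s + 1), g.coeff j * (x + 1) ^ j := by
    intro x
    rw [← hcomp, eval_comp]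
    simp only [eval_add, eval_X, eval_C]
    exact eval_eq_sum_range' hgdeg (x + 1)
  have hfun : (fun x => w x * pφ.eval x) =
      ∑ j ∈ Finset.range (s + 1), g.coeff j • (fun x => (1 + x) ^ j * w x) := by
    funext x
    rw [Finset.sum_apply, heval, Finset.mul_sum]
    apply Finset.sum_congr rfl
    intro j _
    simp only [Pi.smul_apply, smul_eq_mul]
    ring
  rw [hfun, map_sum]
  apply Finset.sum_congr rfl
  intro j _
  rw [_root_.map_smul, smul_eq_mul]

variable {r k : ℤ} (h0k : 0 ≤ k) (hkr : k ≤ r) (Ih : (ℝ → ℝ) →ₗ[ℝ] ℝ)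

/-- definiteness from A1 -/
lemma defin (h0k : 0 ≤ k) (hkr : k ≤ r) (hA1 : AssumptionA1 Ih r k) (q : Polynomial ℝ)
    (hdeg : ∀ n : ℕ, (r : ℤ) ≤ (n : ℤ) → q.coeff n = 0)
    (ha : ∀ j, j < ((k - 1).fdiv 2).toNat → (Polynomial.derivative^[j] q).eval (-1) = 0)
    (hb : ∀ j, j < (k.fdiv 2).toNat → (Polynomial.derivative^[j] q).eval 1 = 0)
    (hvan : ∀ i ∈ Finset.Icc (if k = 0 then 1 else 0) (r - k).toNat,
      Ih (fun t => (1 + t) ^ i * q.eval t) = 0) :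
    q = 0 := by
  by_cases hq0 : q = 0
  · exact hq0
  exfalso
  -- r ≥ 1
  rcases le_or_gt r 0 with hr0 | hr1
  · exact hq0 (Polynomial.ext fun n => by simpa using hdeg n (by omega))
  set A := ((k - 1).fdiv 2).toNat with hA
  set B := (k.fdiv 2).toNat with hB
  have hfd1 : (k - 1).fdiv 2 = (k - 1) / 2 := Int.fdiv_eq_ediv_of_nonneg _ (by norm_num)
  have hfd2 : k.fdiv 2 = k / 2 := Int.fdiv_eq_ediv_of_nonneg _ (by norm_num)
  have hM1 : (1 : ℤ) ≤ max 1 k := le_max_left _ _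
  have hMk : k ≤ max 1 k := le_max_right _ _
  have hMv : max 1 k = if k = 0 then 1 else k := by
    by_cases hk : k = 0
    · simp [hk]
    · rw [if_neg hk, max_eq_right (by omega)]
  -- natDegree q ≤ r.toNat - 1
  have hqdeg : q.natDegree ≤ r.toNat - 1 := by
    rw [natDegree_le_iff_coeff_eq_zero]
    intro N hN
    exact hdeg N (by omega)
  -- divisibility at -1 and 1
  have hdvd : ∀ (x₀ : ℝ) (n : ℕ), (∀ j, j < n → (Polynomial.derivative^[j] q).eval x₀ = 0) →
      (X - C x₀) ^ n ∣ q := by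
    intro x₀ n hroots
    rcases Nat.eq_zero_or_pos n with hn | hn
    · simp [hn]
    have hlt : n - 1 < q.rootMultiplicity x₀ := by
      apply lt_rootMultiplicity_of_isRoot_iterate_derivative_of_mem_nonZeroDivisors' hq0
      · intro m hm
        exact hroots m (by omega)
      · intro m _ hm0
        exact mem_nonZeroDivisors_of_ne_zero (by exact_mod_cast hm0)
    exact dvd_trans (pow_dvd_pow _ (by omega)) (q.pow_rootMultiplicity_dvd x₀)
  have hdvdA : (X - C (-1 : ℝ)) ^ A ∣ q := hdvd (-1) A ha
  have hdvdB : (X - C (1 : ℝ)) ^ B ∣ q := hdvd 1 B hb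
  have hco : IsCoprime ((X - C (-1 : ℝ)) ^ A) ((X - C (1 : ℝ)) ^ B) :=
    (Polynomial.isCoprime_X_sub_C_of_isUnit_sub (by norm_num)).pow
  obtain ⟨ψ, hψ⟩ : (X - C (-1 : ℝ)) ^ A * (X - C 1) ^ B ∣ q := hco.mul_dvd hdvdA hdvdB
  have hψ0 : ψ ≠ 0 := by
    intro h
    exact hq0 (by rw [hψ, h, mul_zero])
  -- degree of ψ
  have hABk : (A : ℤ) + B = max 1 k - 1 := by
    rw [hMv]
    split <;> omega
  have hXne : ∀ x₀ : ℝ, ∀ n : ℕ, ((X - C x₀) ^ n : ℝ[X]) ≠ 0 :=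
    fun x₀ n => pow_ne_zero _ (X_sub_C_ne_zero x₀)
  have hqfac : q.natDegree = A + B + ψ.natDegree := by
    have e1 : ((X - C (-1 : ℝ)) ^ A).natDegree = A := by
      rw [natDegree_pow, natDegree_X_sub_C, mul_one]
    have e2 : ((X - C (1 : ℝ)) ^ B).natDegree = B := by
      rw [natDegree_pow, natDegree_X_sub_C, mul_one]
    rw [hψ, natDegree_mul (mul_ne_zero (hXne _ _) (hXne _ _)) hψ0,
      natDegree_mul (hXne _ _) (hXne _ _), e1, e2]
  have hψdeg : ∀ n : ℕ, (r - max 1 k : ℤ) < n → ψ.coeff n = 0 := by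
    intro n hn
    apply coeff_eq_zero_of_natDegree_lt
    omega
  -- pointwise factorization
  have hqeval : ∀ x : ℝ, q.eval x = (x + 1) ^ A * (x - 1) ^ B * ψ.eval x := by
    intro x
    rw [hψ]
    simp [sub_neg_eq_add]
  -- A1 exponents
  have hA' : ((k - 1).fdiv 2).natAbs = if k = 0 then 1 else A := by
    split <;> omega
  have hvanishing : ∀ φ : ℝ → ℝ, IsPolyR (r - max 1 k) φ →
      Ih (fun x => (1 - x) ^ (k.fdiv 2).toNat * (1 + x) ^ ((k - 1).fdiv 2).natAbs *
        (ψ.eval x * φ x)) = 0 := by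
    intro φf hφf
    obtain ⟨pφ, hpc, hpe⟩ := hφf
    have hpdeg : pφ.natDegree ≤ (r - max 1 k).toNat := by
      rw [natDegree_le_iff_coeff_eq_zero]
      intro N hN
      exact hpc N (by omega)
    set s := (r - max 1 k).toNat with hs
    set w : ℝ → ℝ := fun x =>
      (1 - x) ^ (k.fdiv 2).toNat * (1 + x) ^ ((k - 1).fdiv 2).natAbs * ψ.eval x with hw
    have harr : (fun x => (1 - x) ^ (k.fdiv 2).toNat * (1 + x) ^ ((k - 1).fdiv 2).natAbs *
        (ψ.eval x * φf x)) = fun x => w x * pφ.eval x := by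
      funext x
      rw [hw, hpe]
      ring
    rw [harr, expandIh Ih s w pφ hpdeg]
    apply Finset.sum_eq_zero
    intro j hj
    rw [Finset.mem_range] at hj
    have hji : j ≤ s := by omega
    -- identify the integrand with a multiple of (1+x)^(j+δ) * q
    have hδ : (fun x => (1 + x) ^ j * w x) =
        ((-1 : ℝ) ^ B) • fun x => (1 + x) ^ (j + (if k = 0 then 1 else 0)) * q.eval x := by
      funext x
      simp only [Pi.smul_apply, smul_eq_mul, hw]
      rw [hqeval, hA', ← hB]
      have h1x : (1 - x) ^ B = (-1 : ℝ) ^ B * (x - 1) ^ B := by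
        rw [← neg_pow, neg_sub]
      rw [h1x]
      by_cases hk : k = 0
      · have hA0 : A = 0 := by omega
        have hB0 : B = 0 := by omega
        simp only [if_pos hk, hA0, hB0, pow_zero]
        ring
      · simp only [if_neg hk, add_zero]
        ring
    have hmem : j + (if k = 0 then 1 else 0) ∈
        Finset.Icc (if k = 0 then 1 else 0) (r - k).toNat := by
      rw [Finset.mem_Icc]
      have hsv : (s : ℤ) = r - max 1 k := by omega
      rw [hMv] at hsv
      constructor
      · split <;> omega
      · by_cases hk : k = 0
        · rw [if_pos hk]
          rw [if_pos hk] at hsv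
          omega
        · rw [if_neg hk]
          rw [if_neg hk] at hsv
          omega
    rw [hδ, _root_.map_smul, smul_eq_mul, hvan _ hmem, mul_zero, mul_zero]
  -- apply A1
  have hψpoly : IsPolyR (r - max 1 k) (fun x => ψ.eval x) := ⟨ψ, hψdeg, fun _ => rfl⟩
  have := hA1 (fun x => ψ.eval x) hψpoly hvanishing
  exact hψ0 (Polynomial.zero_of_eval_zero ψ this)


lemma supNorm_le {d : ℕ} {s : Set ℝ} {φ : ℝ → Vec d} {C : ℝ} (hC : 0 ≤ C)
    (h : ∀ x ∈ s, ‖φ x‖ ≤ C) : supNorm s φ ≤ C :=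
  Real.iSup_le (fun x => h x x.2) hC

lemma le_supNorm {d : ℕ} {s : Set ℝ} {φ : ℝ → Vec d} {C : ℝ}
    (h : ∀ x ∈ s, ‖φ x‖ ≤ C) {x : ℝ} (hx : x ∈ s) : ‖φ x‖ ≤ supNorm s φ :=
  le_ciSup ⟨C, fun y hy => by obtain ⟨z, hz, rfl⟩ := hy; exact h z z.2⟩ (⟨x, hx⟩ : s)

-- bound on Pfun on the reference interval
lemma Pfun_bound {d m : ℕ} (c : Fin d → Fin m → ℝ) {x : ℝ} (hx : |x| ≤ 1) :
    ‖Pfun c x‖ ≤ Real.sqrt d * m * ‖c‖ := by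
  have hcomp : ∀ i, |Pfun c x i| ≤ m * ‖c‖ := by
    intro i
    have : Pfun c x i = ∑ j : Fin m, c i j * x ^ (j : ℕ) := by
      simp [Pfun, pev, mkVec, qpoly, Polynomial.eval_finset_sum]
    rw [this]
    calc |∑ j : Fin m, c i j * x ^ (j : ℕ)| ≤ ∑ j : Fin m, |c i j * x ^ (j : ℕ)| :=
          Finset.abs_sum_le_sum_abs _ _
      _ ≤ ∑ _j : Fin m, ‖c‖ := by
          apply Finset.sum_le_sum
          intro j _
          rw [abs_mul]
          have h1 : |c i j| ≤ ‖c‖ := by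
            calc |c i j| = ‖c i j‖ := rfl
              _ ≤ ‖c i‖ := norm_le_pi_norm (c i) j
              _ ≤ ‖c‖ := norm_le_pi_norm c i
          have h2 : |x ^ (j : ℕ)| ≤ 1 := by
            rw [abs_pow]
            exact pow_le_one₀ (abs_nonneg x) hx
          calc |c i j| * |x ^ (j:ℕ)| ≤ ‖c‖ * 1 :=
                mul_le_mul h1 h2 (abs_nonneg _) (abs_nonneg _ |>.trans h1)
            _ = ‖c‖ := mul_one _
      _ = m * ‖c‖ := by rw [Finset.sum_const, Finset.card_univ, Fintype.card_fin, nsmul_eq_mul]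
  have hnn : (0:ℝ) ≤ m * ‖c‖ := by positivity
  rw [EuclideanSpace.norm_eq]
  calc Real.sqrt (∑ i, ‖Pfun c x i‖ ^ 2) ≤ Real.sqrt (∑ _i : Fin d, (m * ‖c‖) ^ 2) := by
        apply Real.sqrt_le_sqrt
        apply Finset.sum_le_sum
        intro i _
        have := hcomp i
        have h0 : ‖Pfun c x i‖ = |Pfun c x i| := rfl
        rw [h0]
        exact pow_le_pow_left₀ (abs_nonneg _) this 2
    _ = Real.sqrt d * m * ‖c‖ := by
        rw [Finset.sum_const, Finset.card_univ, Fintype.card_fin, nsmul_eq_mul,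
          Real.sqrt_mul (by positivity), Real.sqrt_sq hnn, mul_assoc]

/-- abstract norm-equivalence via compactness -/
lemma keyLemma (d m : ℕ) (N : (Fin d → Fin m → ℝ) → ℝ)
    (hcont : Continuous N) (hnonneg : ∀ c, 0 ≤ N c)
    (hhomog : ∀ (s : ℝ) c, N (s • c) = |s| * N c)
    (hdef : ∀ c, N c = 0 → c = 0) :
    ∃ κ : ℝ, 0 < κ ∧ ∀ c : Fin d → Fin m → ℝ, supNorm (Ioc (-1 : ℝ) 1) (Pfun c) ≤ κ * N c := by
  have hsup_le : ∀ c : Fin d → Fin m → ℝ, supNorm (Ioc (-1 : ℝ) 1) (Pfun c) ≤ Real.sqrt d * m * ‖c‖ := by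
    intro c
    apply supNorm_le (by positivity)
    intro x hx
    exact Pfun_bound c (abs_le.mpr ⟨hx.1.le, hx.2⟩)
  rcases subsingleton_or_nontrivial (Fin d → Fin m → ℝ) with hV | hV
  · refine ⟨1, one_pos, fun c => ?_⟩
    have hc0 : c = 0 := Subsingleton.elim c 0
    have : supNorm (Ioc (-1 : ℝ) 1) (Pfun c) ≤ Real.sqrt d * m * ‖c‖ := hsup_le c
    rw [hc0] at this ⊢
    simp only [norm_zero, mul_zero] at this
    linarith [hnonneg 0]
  · obtain ⟨c₀, hc₀mem, hmin⟩ :=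
      (isCompact_sphere (0 : Fin d → Fin m → ℝ) 1).exists_isMinOn
        (NormedSpace.sphere_nonempty.mpr one_pos.le) hcont.continuousOn
    replace hmin := fun y hy => isMinOn_iff.mp hmin y hy
    have hc₀norm : ‖c₀‖ = 1 := by simpa using hc₀mem
    have hNc₀ : 0 < N c₀ := by
      rcases (hnonneg c₀).lt_or_eq with h | h
      · exact h
      · exfalso
        have : c₀ = 0 := hdef c₀ h.symm
        rw [this] at hc₀norm
        simp at hc₀norm
    refine ⟨Real.sqrt d * m / N c₀ + 1, by positivity, fun c => ?_⟩
    by_cases hc : c = 0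
    · have h0 : N (0 : Fin d → Fin m → ℝ) = 0 := by
        have := hhomog 0 0
        simpa using this
      rw [hc, h0, mul_zero]
      have := hsup_le 0
      simpa using this
    · have hcn : 0 < ‖c‖ := norm_pos_iff.mpr hc
      have hunit : (‖c‖⁻¹ • c) ∈ Metric.sphere (0 : Fin d → Fin m → ℝ) 1 := by
        simp [norm_smul, abs_of_pos (inv_pos.mpr hcn), inv_mul_cancel₀ hcn.ne']
      have hlow : N c₀ * ‖c‖ ≤ N c := by
        have h1 := hmin _ hunit
        have h2 : N (‖c‖⁻¹ • c) = ‖c‖⁻¹ * N c := by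
          rw [hhomog, abs_of_pos (inv_pos.mpr hcn)]
        rw [h2] at h1
        calc N c₀ * ‖c‖ ≤ (‖c‖⁻¹ * N c) * ‖c‖ := by nlinarith
          _ = N c := by field_simp
      calc supNorm (Ioc (-1 : ℝ) 1) (Pfun c) ≤ Real.sqrt d * m * ‖c‖ := hsup_le c
        _ ≤ (Real.sqrt d * m / N c₀) * N c := by
            rw [div_mul_eq_mul_div, le_div_iff₀ hNc₀]
            have hsd : (0:ℝ) ≤ Real.sqrt d * m := by positivity
            nlinarith [mul_le_mul_of_nonneg_left hlow hsd]
        _ ≤ (Real.sqrt d * m / N c₀ + 1) * N c := by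
            have := hnonneg c
            nlinarith

set_option maxHeartbeats 1000000 in
lemma coreIneq (d : ℕ) (r k : ℤ) (h0k : 0 ≤ k) (hkr : k ≤ r)
    (Ih : (ℝ → ℝ) →ₗ[ℝ] ℝ) (hA1 : AssumptionA1 Ih r k) :
    ∃ κ : ℝ, 0 < κ ∧ ∀ c : Fin d → Fin r.toNat → ℝ,
      supNorm (Ioc (-1 : ℝ) 1) (Pfun c) ≤ κ *
        ((∑ i ∈ Finset.Icc 1 ((k - 1).fdiv 2).toNat, ‖iteratedDeriv (i - 1) (Pfun c) (-1)‖) +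
          (∑ i ∈ Finset.Icc 1 (k.fdiv 2).toNat, ‖iteratedDeriv (i - 1) (Pfun c) 1‖) +
          ∑ i ∈ Finset.Icc (if k = 0 then 1 else 0) (r - k).toNat,
            ‖vecI Ih (fun t => (1 + t) ^ i • Pfun c t)‖) := by
  set m := r.toNat with hm
  set N : (Fin d → Fin m → ℝ) → ℝ := fun c =>
    (∑ i ∈ Finset.Icc 1 ((k - 1).fdiv 2).toNat, ‖iteratedDeriv (i - 1) (Pfun c) (-1)‖) +
      (∑ i ∈ Finset.Icc 1 (k.fdiv 2).toNat, ‖iteratedDeriv (i - 1) (Pfun c) 1‖) +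
      ∑ i ∈ Finset.Icc (if k = 0 then 1 else 0) (r - k).toNat,
        ‖vecI Ih (fun t => (1 + t) ^ i • Pfun c t)‖ with hN
  have hNrep : N = fun c =>
      (∑ i ∈ Finset.Icc 1 ((k - 1).fdiv 2).toNat,
        ‖lin (fun j => (Polynomial.derivative^[i - 1] ((X : ℝ[X]) ^ (j : ℕ))).eval (-1)) c‖) +
      (∑ i ∈ Finset.Icc 1 (k.fdiv 2).toNat,
        ‖lin (fun j => (Polynomial.derivative^[i - 1] ((X : ℝ[X]) ^ (j : ℕ))).eval 1) c‖) +
      ∑ i ∈ Finset.Icc (if k = 0 then 1 else 0) (r - k).toNat,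
        ‖lin (fun j => Ih (fun x => (1 + x) ^ i * x ^ (j : ℕ))) c‖ := by
    funext c
    simp only [hN]
    have e1 : (∑ i ∈ Finset.Icc 1 ((k - 1).fdiv 2).toNat, ‖iteratedDeriv (i - 1) (Pfun c) (-1)‖)
        = ∑ i ∈ Finset.Icc 1 ((k - 1).fdiv 2).toNat,
          ‖lin (fun j => (Polynomial.derivative^[i - 1] ((X : ℝ[X]) ^ (j : ℕ))).eval (-1)) c‖ :=
      Finset.sum_congr rfl fun i _ => by rw [rep_itder]
    have e2 : (∑ i ∈ Finset.Icc 1 (k.fdiv 2).toNat, ‖iteratedDeriv (i - 1) (Pfun c) 1‖)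
        = ∑ i ∈ Finset.Icc 1 (k.fdiv 2).toNat,
          ‖lin (fun j => (Polynomial.derivative^[i - 1] ((X : ℝ[X]) ^ (j : ℕ))).eval 1) c‖ :=
      Finset.sum_congr rfl fun i _ => by rw [rep_itder]
    have e3 : (∑ i ∈ Finset.Icc (if k = 0 then 1 else 0) (r - k).toNat,
          ‖vecI Ih (fun t => (1 + t) ^ i • Pfun c t)‖)
        = ∑ i ∈ Finset.Icc (if k = 0 then 1 else 0) (r - k).toNat,
          ‖lin (fun j => Ih (fun x => (1 + x) ^ i * x ^ (j : ℕ))) c‖ :=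
      Finset.sum_congr rfl fun i _ => by rw [rep_quad]
    rw [e1, e2, e3]
  have hcont : Continuous N := by
    rw [hNrep]
    apply Continuous.add
    apply Continuous.add
    all_goals
      apply continuous_finset_sum
      intro i _
      exact (lin_cont _).norm
  have hnonneg : ∀ c, 0 ≤ N c := by
    intro c
    rw [hN]
    have h3 : ∀ (s : Finset ℕ) (f : ℕ → Vec d), 0 ≤ ∑ i ∈ s, ‖f i‖ :=
      fun s f => Finset.sum_nonneg fun i _ => norm_nonneg _
    positivity
  have hhomog : ∀ (s : ℝ) c, N (s • c) = |s| * N c := by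
    intro s c
    rw [hNrep]
    simp only [lin_smul, norm_smul, Real.norm_eq_abs, ← Finset.mul_sum, ← mul_add]
  have hdef : ∀ c, N c = 0 → c = 0 := by
    intro c hNc
    simp only [hN] at hNc
    set S1 := ∑ i ∈ Finset.Icc 1 ((k - 1).fdiv 2).toNat, ‖iteratedDeriv (i - 1) (Pfun c) (-1)‖
      with hS1
    set S2 := ∑ i ∈ Finset.Icc 1 (k.fdiv 2).toNat, ‖iteratedDeriv (i - 1) (Pfun c) 1‖ with hS2
    set S3 := ∑ i ∈ Finset.Icc (if k = 0 then 1 else 0) (r - k).toNat,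
        ‖vecI Ih (fun t => (1 + t) ^ i • Pfun c t)‖ with hS3
    have hn1 : 0 ≤ S1 := Finset.sum_nonneg fun i _ => norm_nonneg _
    have hn2 : 0 ≤ S2 := Finset.sum_nonneg fun i _ => norm_nonneg _
    have hn3 : 0 ≤ S3 := Finset.sum_nonneg fun i _ => norm_nonneg _
    have hz1 : S1 = 0 := by linarith
    have hz2 : S2 = 0 := by linarith
    have hz3 : S3 = 0 := by linarith
    have he1 := (Finset.sum_eq_zero_iff_of_nonneg (fun i _ => norm_nonneg _)).mp hz1
    have he2 := (Finset.sum_eq_zero_iff_of_nonneg (fun i _ => norm_nonneg _)).mp hz2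
    have he3 := (Finset.sum_eq_zero_iff_of_nonneg (fun i _ => norm_nonneg _)).mp hz3
    funext i' j
    simp only [Pi.zero_apply]
    have hq0 : qpoly c i' = 0 := by
      apply defin (r := r) (k := k) Ih h0k hkr hA1
      · intro n hn
        exact qpoly_coeff_ge c i' (by omega)
      · intro l hl
        have h := he1 (l + 1) (Finset.mem_Icc.mpr ⟨by omega, by omega⟩)
        rw [norm_eq_zero] at h
        have hcomp : iteratedDeriv (l + 1 - 1) (Pfun c) (-1) i'
            = (Polynomial.derivative^[l] (qpoly c i')).eval (-1) := by
          rw [Nat.add_sub_cancel, Pfun, pev_iteratedDeriv]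
          rfl
        rw [← hcomp, h]
        rfl
      · intro l hl
        have h := he2 (l + 1) (Finset.mem_Icc.mpr ⟨by omega, by omega⟩)
        rw [norm_eq_zero] at h
        have hcomp : iteratedDeriv (l + 1 - 1) (Pfun c) 1 i'
            = (Polynomial.derivative^[l] (qpoly c i')).eval 1 := by
          rw [Nat.add_sub_cancel, Pfun, pev_iteratedDeriv]
          rfl
        rw [← hcomp, h]
        rfl
      · intro i hi
        have h := he3 i hi
        rw [norm_eq_zero] at h
        have hcomp : vecI Ih (fun t => (1 + t) ^ i • Pfun c t) i'
            = Ih (fun t => (1 + t) ^ i * (qpoly c i').eval t) := rfl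
        rw [← hcomp, h]
        rfl
    rw [← qpoly_coeff_fin c i' j, hq0, coeff_zero]
  obtain ⟨κ, hκ, hineq⟩ := keyLemma d m N hcont hnonneg hhomog hdef
  exact ⟨κ, hκ, fun c => by have := hineq c; rw [hN] at this; exact this⟩

lemma comp_affine_itder (p : ℝ[X]) (c0 c1 : ℝ) (n : ℕ) :
    Polynomial.derivative^[n] (p.comp (C c0 + C c1 * X))
      = C (c1 ^ n) * ((Polynomial.derivative^[n] p).comp (C c0 + C c1 * X)) := by
  induction n with
  | zero => simp
  | succ n ih =>
      rw [Function.iterate_succ_apply', ih, derivative_C_mul, derivative_comp]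
      have hT : Polynomial.derivative (C c0 + C c1 * X) = C c1 := by
        simp
      rw [hT, ← Function.iterate_succ_apply' Polynomial.derivative n p]
      rw [pow_succ, C_mul]
      ring

lemma vecI_smul {d : ℕ} (Ih : (ℝ → ℝ) →ₗ[ℝ] ℝ) (s : ℝ) (f : ℝ → Vec d) :
    vecI Ih (fun x => s • f x) = s • vecI Ih f := by
  ext i
  show Ih (fun x => (s • f x) i) = (s • vecI Ih f) i
  have h1 : (fun x => (s • f x) i) = s • (fun x => f x i) := by
    funext x
    rfl
  rw [h1, _root_.map_smul]
  rfl

lemma Tmap_Tinv {a b : ℝ} (hab : a < b) (y : ℝ) : Tmap a b (Tinv a b y) = y := by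
  rw [Tmap, Tinv]
  have : b - a ≠ 0 := by linarith
  field_simp
  ring

lemma Tinv_mem {a b : ℝ} (hab : a < b) {y : ℝ} (hy : y ∈ Ioc a b) :
    Tinv a b y ∈ Ioc (-1 : ℝ) 1 := by
  rw [Tinv]
  have h : 0 < b - a := by linarith
  constructor
  · rw [lt_div_iff₀ h]
    obtain ⟨h1, h2⟩ := hy
    nlinarith
  · rw [div_le_one h]
    obtain ⟨h1, h2⟩ := hy
    nlinarith

lemma Tmap_negone (a b : ℝ) : Tmap a b (-1) = a := by rw [Tmap]; ring

lemma Tmap_one (a b : ℝ) : Tmap a b 1 = b := by rw [Tmap]; ring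

lemma eval_T (c0 c1 x : ℝ) : (C c0 + C c1 * X : ℝ[X]).eval x = c0 + c1 * x := by simp

lemma supNorm_nonneg {d : ℕ} (s : Set ℝ) (φ : ℝ → Vec d) : 0 ≤ supNorm s φ :=
  Real.iSup_nonneg fun x => norm_nonneg _

end VTD

open MeasureTheory in
theorem VTD.stmt3_aux (d : ℕ) (r k : ℤ) (h0k : 0 ≤ k) (hkr : k ≤ r)
    (Ih : (ℝ → ℝ) →ₗ[ℝ] ℝ) (hA1 : AssumptionA1 Ih r k) :
    ∃ κ : ℝ, 0 < κ ∧ ∀ a b : ℝ, a < b → ∀ φ : ℝ → Vec d, IsPolyV r φ →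
      ((∫ x in Ioc a b, ‖deriv φ x‖) ≤ (b - a) * supNorm (Ioc a b) (deriv φ) ∧
        (b - a) * supNorm (Ioc a b) (deriv φ) ≤
          κ * (∑ i ∈ Finset.Icc 1 ((k - 1).fdiv 2).toNat,
                ((b - a) / 2) ^ i * ‖iteratedDeriv i φ a‖ +
              ∑ i ∈ Finset.Icc 1 (k.fdiv 2).toNat,
                ((b - a) / 2) ^ i * ‖iteratedDeriv i φ b‖ +
              ∑ i ∈ Finset.Icc (if k = 0 then 1 else 0) (r - k).toNat,
                ‖locI Ih a b (fun x => (1 + Tinv a b x) ^ i • deriv φ x)‖)) ∧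
      supNorm (Ioc a b) φ ≤
        min ‖φ a‖ ‖φ b‖ + ∫ x in Ioc a b, ‖deriv φ x‖ := by
  classical
  obtain ⟨κ₀, hκ₀, hcore⟩ := VTD.coreIneq d r k h0k hkr Ih hA1
  refine ⟨2 * κ₀, by positivity, ?_⟩
  intro a b hab φ hφ
  have hba : (0 : ℝ) < b - a := by linarith
  have hτ : (0 : ℝ) < (b - a) / 2 := by linarith
  choose p hpc hpe using hφ
  have hφeq : φ = VTD.pev p := funext fun x => PiLp.ext fun i => hpe i x
  have hφd : deriv φ = VTD.pev fun i => (p i).derivative := by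
    rw [hφeq, VTD.pev_deriv]
  have hcontd : Continuous (deriv φ) := by
    rw [hφd]; exact ((VTD.pev_contDiff (n := 1) _).continuous)
  obtain ⟨C₁, hC₁⟩ := (isCompact_Icc (a := a) (b := b)).exists_bound_of_continuousOn
    hcontd.continuousOn
  have hboundd : ∀ x ∈ Ioc a b, ‖deriv φ x‖ ≤ C₁ := fun x hx => hC₁ x (Ioc_subset_Icc_self hx)
  have hintd : IntegrableOn (fun x => ‖deriv φ x‖) (Ioc a b) volume :=
    (hcontd.norm.integrableOn_Ioc)
  -- coefficient data
  set T : ℝ[X] := C ((a + b) / 2) + C ((b - a) / 2) * X with hT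
  set u : Fin d → ℝ[X] := fun i => (p i).comp T with hu
  set s : Fin d → ℝ[X] := fun i => (u i).derivative with hs
  have hTdeg : T.natDegree ≤ 1 := by
    apply le_trans (natDegree_add_le _ _)
    simp only [natDegree_C, max_le_iff]
    constructor
    · omega
    · exact le_trans (natDegree_mul_le) (by simp [natDegree_X])
  have hpdeg : ∀ i, (p i).natDegree ≤ r.toNat := fun i =>
    natDegree_le_iff_coeff_eq_zero.mpr fun N hN => hpc i N (by omega)
  have hudeg : ∀ i, (u i).natDegree ≤ r.toNat := by
    intro i
    calc (u i).natDegree ≤ (p i).natDegree * T.natDegree := natDegree_comp_le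
      _ ≤ r.toNat * 1 := Nat.mul_le_mul (hpdeg i) hTdeg
      _ = r.toNat := mul_one _
  have hscoeff : ∀ i n, r.toNat ≤ n → (s i).coeff n = 0 := by
    intro i n hn
    show ((u i).derivative).coeff n = 0
    rw [coeff_derivative, coeff_eq_zero_of_natDegree_lt (lt_of_le_of_lt (hudeg i) (by omega)),
      zero_mul]
  set c : Fin d → Fin r.toNat → ℝ := fun i j => (s i).coeff j with hc
  have hqpoly : ∀ i, VTD.qpoly c i = s i := by
    intro i
    apply Polynomial.ext
    intro n
    by_cases hn : n < r.toNat
    · have h := VTD.qpoly_coeff_fin c i ⟨n, hn⟩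
      simpa using h
    · rw [VTD.qpoly_coeff_ge c i (by omega), hscoeff i n (by omega)]
  have hPc : VTD.Pfun c = VTD.pev s := by
    funext x
    ext i
    show (VTD.qpoly c i).eval x = (s i).eval x
    rw [hqpoly]
  -- scaling identity
  have hkey : ∀ (n : ℕ) (x : ℝ), iteratedDeriv n (VTD.Pfun c) x
      = ((b - a) / 2) ^ (n + 1) • iteratedDeriv (n + 1) φ (Tmap a b x) := by
    intro n x
    rw [hPc, VTD.pev_iteratedDeriv, hφeq, VTD.pev_iteratedDeriv]
    ext i
    have h1 : Polynomial.derivative^[n] (s i) = Polynomial.derivative^[n + 1] (u i) := by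
      rw [hs, ← Function.iterate_succ_apply]
    show (Polynomial.derivative^[n] (s i)).eval x = _
    rw [h1, hu]
    show ((Polynomial.derivative^[n + 1] ((p i).comp T))).eval x = _
    rw [hT, VTD.comp_affine_itder]
    simp only [eval_mul, eval_C, eval_comp, VTD.eval_T, PiLp.smul_apply, VTD.pev_apply,
      smul_eq_mul, Tmap]
  -- derivative scaling
  have hder_scale : ∀ t : ℝ, deriv φ (Tmap a b t) = (2 / (b - a)) • VTD.Pfun c t := by
    intro t
    have h0 := hkey 0 t
    rw [iteratedDeriv_zero, zero_add, iteratedDeriv_one, pow_one] at h0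
    rw [h0, smul_smul]
    have h2 : (2 / (b - a)) * ((b - a) / 2) = 1 := by field_simp
    rw [h2, one_smul]
  constructor
  constructor
  -- Part 1 : integral ≤ (b-a) * sup
  · have hsup_d : ∀ x ∈ Ioc a b, ‖deriv φ x‖ ≤ supNorm (Ioc a b) (deriv φ) :=
      fun x hx => VTD.le_supNorm hboundd hx
    calc (∫ x in Ioc a b, ‖deriv φ x‖)
        ≤ ∫ _x in Ioc a b, supNorm (Ioc a b) (deriv φ) := by
          apply setIntegral_mono_on hintd
            (integrableOn_const (by rw [Real.volume_Ioc]; exact ENNReal.ofReal_ne_top))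
            measurableSet_Ioc hsup_d
      _ = (b - a) * supNorm (Ioc a b) (deriv φ) := by
          rw [setIntegral_const, Real.volume_real_Ioc, max_eq_left hba.le, smul_eq_mul]
  -- Part 2 : the core inequality
  · have hPbound : ∀ x ∈ Ioc (-1 : ℝ) 1, ‖VTD.Pfun c x‖ ≤ Real.sqrt d * r.toNat * ‖c‖ :=
      fun x hx => VTD.Pfun_bound c (abs_le.mpr ⟨hx.1.le, hx.2⟩)
    have hsupab : (b - a) * supNorm (Ioc a b) (deriv φ)
        ≤ 2 * supNorm (Ioc (-1 : ℝ) 1) (VTD.Pfun c) := by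
      have h1 : supNorm (Ioc a b) (deriv φ)
          ≤ (2 / (b - a)) * supNorm (Ioc (-1 : ℝ) 1) (VTD.Pfun c) := by
        apply VTD.supNorm_le
          (mul_nonneg (by positivity) (VTD.supNorm_nonneg _ _))
        intro y hy
        have hTy := VTD.Tinv_mem hab hy
        have hde : deriv φ y = (2 / (b - a)) • VTD.Pfun c (Tinv a b y) := by
          have := hder_scale (Tinv a b y)
          rw [VTD.Tmap_Tinv hab y] at this
          exact this
        rw [hde, norm_smul, Real.norm_eq_abs, abs_of_pos (by positivity)]
        exact mul_le_mul_of_nonneg_left (VTD.le_supNorm hPbound hTy) (by positivity)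
      calc (b - a) * supNorm (Ioc a b) (deriv φ)
          ≤ (b - a) * ((2 / (b - a)) * supNorm (Ioc (-1 : ℝ) 1) (VTD.Pfun c)) :=
            mul_le_mul_of_nonneg_left h1 hba.le
        _ = 2 * supNorm (Ioc (-1 : ℝ) 1) (VTD.Pfun c) := by field_simp
    -- termwise identification
    have hAterm : ∀ i ∈ Finset.Icc 1 ((k - 1).fdiv 2).toNat,
        ‖iteratedDeriv (i - 1) (VTD.Pfun c) (-1)‖
          = ((b - a) / 2) ^ i * ‖iteratedDeriv i φ a‖ := by
      intro i hi
      obtain ⟨hi1, _⟩ := Finset.mem_Icc.mp hi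
      rw [hkey (i - 1) (-1), VTD.Tmap_negone, Nat.sub_add_cancel hi1, norm_smul,
        Real.norm_eq_abs, abs_of_pos (pow_pos hτ _)]
    have hBterm : ∀ i ∈ Finset.Icc 1 (k.fdiv 2).toNat,
        ‖iteratedDeriv (i - 1) (VTD.Pfun c) 1‖
          = ((b - a) / 2) ^ i * ‖iteratedDeriv i φ b‖ := by
      intro i hi
      obtain ⟨hi1, _⟩ := Finset.mem_Icc.mp hi
      rw [hkey (i - 1) 1, VTD.Tmap_one, Nat.sub_add_cancel hi1, norm_smul,
        Real.norm_eq_abs, abs_of_pos (pow_pos hτ _)]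
    have hQterm : ∀ i : ℕ, vecI Ih (fun t => (1 + t) ^ i • VTD.Pfun c t)
        = locI Ih a b (fun x => (1 + Tinv a b x) ^ i • deriv φ x) := by
      intro i
      rw [locI]
      have hg : (fun x => (1 + Tinv a b x) ^ i • deriv φ x) ∘ Tmap a b
          = fun t => (2 / (b - a)) • ((1 + t) ^ i • VTD.Pfun c t) := by
        funext t
        show (1 + Tinv a b (Tmap a b t)) ^ i • deriv φ (Tmap a b t) = _
        have hTinv : Tinv a b (Tmap a b t) = t := by
          rw [Tinv, Tmap]
          field_simp
          ring
        rw [hTinv, hder_scale t, smul_comm]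
      rw [hg, VTD.vecI_smul, smul_smul]
      have h2 : (b - a) / 2 * (2 / (b - a)) = 1 := by field_simp
      rw [h2, one_smul]
    have hsums : (∑ i ∈ Finset.Icc 1 ((k - 1).fdiv 2).toNat,
          ‖iteratedDeriv (i - 1) (VTD.Pfun c) (-1)‖) +
        (∑ i ∈ Finset.Icc 1 (k.fdiv 2).toNat, ‖iteratedDeriv (i - 1) (VTD.Pfun c) 1‖) +
        (∑ i ∈ Finset.Icc (if k = 0 then 1 else 0) (r - k).toNat,
          ‖vecI Ih (fun t => (1 + t) ^ i • VTD.Pfun c t)‖)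
        = ∑ i ∈ Finset.Icc 1 ((k - 1).fdiv 2).toNat,
            ((b - a) / 2) ^ i * ‖iteratedDeriv i φ a‖ +
          ∑ i ∈ Finset.Icc 1 (k.fdiv 2).toNat,
            ((b - a) / 2) ^ i * ‖iteratedDeriv i φ b‖ +
          ∑ i ∈ Finset.Icc (if k = 0 then 1 else 0) (r - k).toNat,
            ‖locI Ih a b (fun x => (1 + Tinv a b x) ^ i • deriv φ x)‖ := by
      have e1 : (∑ i ∈ Finset.Icc 1 ((k - 1).fdiv 2).toNat,
            ‖iteratedDeriv (i - 1) (VTD.Pfun c) (-1)‖)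
          = ∑ i ∈ Finset.Icc 1 ((k - 1).fdiv 2).toNat,
            ((b - a) / 2) ^ i * ‖iteratedDeriv i φ a‖ := Finset.sum_congr rfl hAterm
      have e2 : (∑ i ∈ Finset.Icc 1 (k.fdiv 2).toNat, ‖iteratedDeriv (i - 1) (VTD.Pfun c) 1‖)
          = ∑ i ∈ Finset.Icc 1 (k.fdiv 2).toNat,
            ((b - a) / 2) ^ i * ‖iteratedDeriv i φ b‖ := Finset.sum_congr rfl hBterm
      have e3 : (∑ i ∈ Finset.Icc (if k = 0 then 1 else 0) (r - k).toNat,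
            ‖vecI Ih (fun t => (1 + t) ^ i • VTD.Pfun c t)‖)
          = ∑ i ∈ Finset.Icc (if k = 0 then 1 else 0) (r - k).toNat,
            ‖locI Ih a b (fun x => (1 + Tinv a b x) ^ i • deriv φ x)‖ :=
        Finset.sum_congr rfl fun i _ => by rw [hQterm i]
      rw [e1, e2, e3]
    have hN := hcore c
    rw [hsums] at hN
    calc (b - a) * supNorm (Ioc a b) (deriv φ)
        ≤ 2 * supNorm (Ioc (-1 : ℝ) 1) (VTD.Pfun c) := hsupab
      _ ≤ 2 * (κ₀ * (∑ i ∈ Finset.Icc 1 ((k - 1).fdiv 2).toNat,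
            ((b - a) / 2) ^ i * ‖iteratedDeriv i φ a‖ +
          ∑ i ∈ Finset.Icc 1 (k.fdiv 2).toNat,
            ((b - a) / 2) ^ i * ‖iteratedDeriv i φ b‖ +
          ∑ i ∈ Finset.Icc (if k = 0 then 1 else 0) (r - k).toNat,
            ‖locI Ih a b (fun x => (1 + Tinv a b x) ^ i • deriv φ x)‖)) := by
          linarith
      _ = 2 * κ₀ * (∑ i ∈ Finset.Icc 1 ((k - 1).fdiv 2).toNat,
            ((b - a) / 2) ^ i * ‖iteratedDeriv i φ a‖ +
          ∑ i ∈ Finset.Icc 1 (k.fdiv 2).toNat,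
            ((b - a) / 2) ^ i * ‖iteratedDeriv i φ b‖ +
          ∑ i ∈ Finset.Icc (if k = 0 then 1 else 0) (r - k).toNat,
            ‖locI Ih a b (fun x => (1 + Tinv a b x) ^ i • deriv φ x)‖) := by ring
  -- Part 3 : sup bound via FTC
  · have hφdiff : ∀ x, DifferentiableAt ℝ φ x := by
      rw [hφeq]; exact fun x => (VTD.pev_hasDerivAt p x).differentiableAt
    have hint2 : ∀ u' v' : ℝ, IntervalIntegrable (deriv φ) volume u' v' := fun u' v' =>
      hcontd.intervalIntegrable u' v'
    have hnn : 0 ≤ᵐ[volume.restrict (Ioc a b)] fun t => ‖deriv φ t‖ :=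
      Filter.Eventually.of_forall fun t => norm_nonneg _
    have hintnonneg : 0 ≤ ∫ t in Ioc a b, ‖deriv φ t‖ :=
      setIntegral_nonneg measurableSet_Ioc fun t _ => norm_nonneg _
    apply VTD.supNorm_le
    · exact add_nonneg (le_min (norm_nonneg _) (norm_nonneg _)) hintnonneg
    intro x hx
    have hxa : ‖φ x‖ ≤ ‖φ a‖ + ∫ t in Ioc a b, ‖deriv φ t‖ := by
      have hftc : φ x - φ a = ∫ t in a..x, deriv φ t :=
        (intervalIntegral.integral_deriv_eq_sub (fun y _ => hφdiff y) (hint2 a x)).symm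
      have h1 : ‖φ x - φ a‖ ≤ ∫ t in Ioc a x, ‖deriv φ t‖ := by
        rw [hftc, intervalIntegral.integral_of_le hx.1.le]
        have h2 := intervalIntegral.norm_integral_le_integral_norm
          (f := deriv φ) (a := a) (b := x) (μ := volume) hx.1.le
        rw [intervalIntegral.integral_of_le hx.1.le,
          intervalIntegral.integral_of_le hx.1.le] at h2
        exact h2
      have h3 : (∫ t in Ioc a x, ‖deriv φ t‖) ≤ ∫ t in Ioc a b, ‖deriv φ t‖ :=
        setIntegral_mono_set hintd hnn ((Ioc_subset_Ioc_right hx.2).eventuallyLE)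
      calc ‖φ x‖ = ‖φ a + (φ x - φ a)‖ := by rw [add_sub_cancel]
        _ ≤ ‖φ a‖ + ‖φ x - φ a‖ := norm_add_le _ _
        _ ≤ ‖φ a‖ + ∫ t in Ioc a b, ‖deriv φ t‖ := by linarith
    have hxb : ‖φ x‖ ≤ ‖φ b‖ + ∫ t in Ioc a b, ‖deriv φ t‖ := by
      have hftc : φ b - φ x = ∫ t in x..b, deriv φ t :=
        (intervalIntegral.integral_deriv_eq_sub (fun y _ => hφdiff y) (hint2 x b)).symm
      have h1 : ‖φ b - φ x‖ ≤ ∫ t in Ioc x b, ‖deriv φ t‖ := by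
        rw [hftc, intervalIntegral.integral_of_le hx.2]
        have h2 := intervalIntegral.norm_integral_le_integral_norm
          (f := deriv φ) (a := x) (b := b) (μ := volume) hx.2
        rw [intervalIntegral.integral_of_le hx.2,
          intervalIntegral.integral_of_le hx.2] at h2
        exact h2
      have h3 : (∫ t in Ioc x b, ‖deriv φ t‖) ≤ ∫ t in Ioc a b, ‖deriv φ t‖ :=
        setIntegral_mono_set hintd hnn ((Ioc_subset_Ioc_left hx.1.le).eventuallyLE)
      calc ‖φ x‖ = ‖φ b - (φ b - φ x)‖ := by rw [sub_sub_cancel]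
        _ ≤ ‖φ b‖ + ‖φ b - φ x‖ := norm_sub_le _ _
        _ ≤ ‖φ b‖ + ∫ t in Ioc a b, ‖deriv φ t‖ := by linarith
    rcases le_total ‖φ a‖ ‖φ b‖ with h | h
    · rw [min_eq_left h]; exact hxa
    · rw [min_eq_right h]; exact hxb

end

/-- Lemma 3.4: scaled norm inequalities for polynomials on a mesh
interval `(a, b]`. -/
theorem stmt_3 (d : ℕ) (r k : ℤ) (h0k : 0 ≤ k) (hkr : k ≤ r)
    (Ih : (ℝ → ℝ) →ₗ[ℝ] ℝ) (hA1 : AssumptionA1 Ih r k) :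
    ∃ κ : ℝ, 0 < κ ∧ ∀ a b : ℝ, a < b → ∀ φ : ℝ → Vec d, IsPolyV r φ →
      ((∫ x in Ioc a b, ‖deriv φ x‖) ≤ (b - a) * supNorm (Ioc a b) (deriv φ) ∧
        (b - a) * supNorm (Ioc a b) (deriv φ) ≤
          κ * (∑ i ∈ Finset.Icc 1 ((k - 1).fdiv 2).toNat,
                ((b - a) / 2) ^ i * ‖iteratedDeriv i φ a‖ +
              ∑ i ∈ Finset.Icc 1 (k.fdiv 2).toNat,
                ((b - a) / 2) ^ i * ‖iteratedDeriv i φ b‖ +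
              ∑ i ∈ Finset.Icc (if k = 0 then 1 else 0) (r - k).toNat,
                ‖locI Ih a b (fun x => (1 + Tinv a b x) ^ i • deriv φ x)‖)) ∧
      supNorm (Ioc a b) φ ≤
        min ‖φ a‖ ‖φ b‖ + ∫ x in Ioc a b, ‖deriv φ x‖ :=
  VTD.stmt3_aux d r k h0k hkr Ih hA1
end
end

section
/- Let r ∈ ℕ₀ and suppose Assumption A1 holds with k = 0. Then there is a constant κ_r > 0, depending only on r, d and the reference integrator Î but not on the interval, such that for every interval I_n = (t_{n−1}, t_n] of length τ_n and every φ ∈ P_r(I_n, ℝ^d): sup_{t∈I_n} ‖φ(t)‖ ≤ κ_r · Σ_{i=0}^{r} ‖ I_n[φ'(t)·(1+T_n^{−1}(t))^i] + δ_{0,i}·φ(t_{n−1}^+) ‖. -/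
open Set MeasureTheory
open scoped BigOperators RealInnerProductSpace

noncomputable section

section AuxStmt4
open Polynomial
def evalC {d : ℕ} (r : ℕ) (c : Fin (r+1) → Vec d) (x : ℝ) : Vec d :=
  ∑ j : Fin (r+1), x ^ (j:ℕ) • c j

def devalC {d : ℕ} (r : ℕ) (c : Fin (r+1) → Vec d) (x : ℝ) : Vec d :=
  ∑ j : Fin (r+1), ((((j:ℕ):ℝ)) * x ^ ((j:ℕ) - 1)) • c j

lemma vecI_add {d : ℕ} (Ih : (ℝ → ℝ) →ₗ[ℝ] ℝ) (f g : ℝ → Vec d) :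
    vecI Ih (fun x => f x + g x) = vecI Ih f + vecI Ih g := by
  ext i
  exact map_add Ih (fun x => f x i) (fun x => g x i)

lemma vecI_smul {d : ℕ} (Ih : (ℝ → ℝ) →ₗ[ℝ] ℝ) (s : ℝ) (f : ℝ → Vec d) :
    vecI Ih (fun x => s • f x) = s • vecI Ih f := by
  ext i
  exact map_smul Ih s (fun x => f x i)

lemma evalC_hasDerivAt {d : ℕ} (r : ℕ) (c : Fin (r+1) → Vec d) (x : ℝ) :
    HasDerivAt (evalC r c) (devalC r c x) x :=
  HasDerivAt.fun_sum fun j _ => (hasDerivAt_pow (j:ℕ) x).smul_const (c j)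

lemma devalC_add {d : ℕ} (r : ℕ) (c c' : Fin (r+1) → Vec d) (x : ℝ) :
    devalC r (c + c') x = devalC r c x + devalC r c' x := by
  simp only [devalC, Pi.add_apply, smul_add, Finset.sum_add_distrib]

lemma devalC_smul {d : ℕ} (r : ℕ) (s : ℝ) (c : Fin (r+1) → Vec d) (x : ℝ) :
    devalC r (s • c) x = s • devalC r c x := by
  simp only [devalC, Pi.smul_apply, Finset.smul_sum, smul_comm s]

lemma evalC_add {d : ℕ} (r : ℕ) (c c' : Fin (r+1) → Vec d) (x : ℝ) :
    evalC r (c + c') x = evalC r c x + evalC r c' x := by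
  simp only [evalC, Pi.add_apply, smul_add, Finset.sum_add_distrib]

lemma evalC_smul {d : ℕ} (r : ℕ) (s : ℝ) (c : Fin (r+1) → Vec d) (x : ℝ) :
    evalC r (s • c) x = s • evalC r c x := by
  simp only [evalC, Pi.smul_apply, Finset.smul_sum, smul_comm s]

def Fmap (d r : ℕ) (Ih : (ℝ → ℝ) →ₗ[ℝ] ℝ) :
    (Fin (r+1) → Vec d) →ₗ[ℝ] (Fin (r+1) → Vec d) where
  toFun c := fun i => vecI Ih (fun x => (1+x)^(i:ℕ) • devalC r c x) +
      (if i = 0 then evalC r c (-1) else 0)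
  map_add' c c' := by
    funext i
    show vecI Ih (fun x => (1+x)^(i:ℕ) • devalC r (c + c') x) + _ = _
    have h1 : (fun x : ℝ => (1+x)^(i:ℕ) • devalC r (c+c') x)
        = fun x => (1+x)^(i:ℕ) • devalC r c x + (1+x)^(i:ℕ) • devalC r c' x := by
      funext x; rw [devalC_add, smul_add]
    rw [h1, vecI_add]
    show _ = (vecI Ih (fun x => (1+x)^(i:ℕ) • devalC r c x) + _) +
      (vecI Ih (fun x => (1+x)^(i:ℕ) • devalC r c' x) + _)
    by_cases h0 : i = 0 <;> simp [h0, evalC_add] <;> abel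
  map_smul' s c := by
    funext i
    show vecI Ih (fun x => (1+x)^(i:ℕ) • devalC r (s • c) x) + _ = _
    have h1 : (fun x : ℝ => (1+x)^(i:ℕ) • devalC r (s • c) x)
        = fun x => s • ((1+x)^(i:ℕ) • devalC r c x) := by
      funext x; rw [devalC_smul, smul_comm]
    rw [h1, vecI_smul]
    show _ = s • (vecI Ih (fun x => (1+x)^(i:ℕ) • devalC r c x) + _)
    by_cases h0 : i = 0 <;> simp [h0, evalC_smul, smul_add]


lemma Fmap_apply (d r : ℕ) (Ih : (ℝ → ℝ) →ₗ[ℝ] ℝ) (c : Fin (r+1) → Vec d) (i : Fin (r+1)) :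
    Fmap d r Ih c i = vecI Ih (fun x => (1+x)^(i:ℕ) • devalC r c x) +
      (if i = 0 then evalC r c (-1) else 0) := rfl



lemma stmt4_key {r : ℕ} {Ih : (ℝ → ℝ) →ₗ[ℝ] ℝ} (hA1 : AssumptionA1 Ih (r:ℤ) 0)
    (ψ : ℝ → ℝ) (hψ : IsPolyR ((r:ℤ)-1) ψ)
    (h : ∀ i : ℕ, 1 ≤ i → i ≤ r → Ih (fun x => (1+x)^i * ψ x) = 0) :
    ∀ x, ψ x = 0 := by
  have hmax : (r:ℤ) - max 1 0 = (r:ℤ) - 1 := by norm_num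
  apply hA1 ψ (by rw [hmax]; exact hψ)
  intro φ hφ
  obtain ⟨q, hq1, hq2⟩ := hφ
  rw [hmax] at hq1
  have hgoal : (fun x : ℝ => (1-x)^(((0:ℤ)).fdiv 2).toNat *
      (1+x)^((((0:ℤ)) - 1).fdiv 2).natAbs * (ψ x * φ x))
      = fun x => (1+x) * (ψ x * φ x) := by
    funext x
    rw [show (((0:ℤ)).fdiv 2).toNat = 0 by decide,
        show ((((0:ℤ)) - 1).fdiv 2).natAbs = 1 by decide]
    ring
  rw [hgoal]
  set q' : Polynomial ℝ := q.comp (X - C 1) with hq'def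
  have hq'c : ∀ n : ℕ, r ≤ n → q'.coeff n = 0 := by
    rcases Nat.eq_zero_or_pos r with hr | hr
    · have hq0 : q = 0 := by
        ext n; simpa using hq1 n (by rw [hr]; push_cast; omega)
      intro n _; simp [hq'def, hq0]
    · intro n hn
      apply coeff_eq_zero_of_natDegree_lt
      calc q'.natDegree ≤ q.natDegree * (X - C (1:ℝ)).natDegree := natDegree_comp_le
        _ ≤ (r-1) * 1 := by
            rw [natDegree_X_sub_C]
            exact Nat.mul_le_mul_right _ (natDegree_le_iff_coeff_eq_zero.mpr
              (fun N hN => hq1 N (by push_cast; omega)))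
        _ < n := by omega
  have hrep : ∀ x : ℝ, φ x = ∑ l ∈ Finset.range r, q'.coeff l * (1+x)^l := by
    intro x
    have h2 : q' = ∑ l ∈ Finset.range r, C (q'.coeff l) * X ^ l := by
      ext n
      rw [finset_sum_coeff]
      simp only [coeff_C_mul, coeff_X_pow, mul_ite, mul_one, mul_zero]
      rw [Finset.sum_ite_eq (Finset.range r) n (fun l => q'.coeff l)]
      by_cases hn : n ∈ Finset.range r
      · simp [hn]
      · simp [hn, hq'c n (by simpa using hn)]
    have h3 : q.eval x = q'.eval (1 + x) := by
      rw [hq'def, eval_comp]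
      congr 1
      simp
    rw [hq2, h3]
    conv_lhs => rw [h2]
    rw [eval_finset_sum]
    simp
  have hfun : (fun x : ℝ => (1+x) * (ψ x * φ x))
      = ∑ l ∈ Finset.range r, (q'.coeff l) • (fun x : ℝ => (1+x)^(l+1) * ψ x) := by
    funext x
    simp only [Finset.sum_apply, Pi.smul_apply, smul_eq_mul, hrep x, Finset.mul_sum]
    exact Finset.sum_congr rfl fun l _ => by ring
  rw [hfun, map_sum]
  apply Finset.sum_eq_zero
  intro l hl
  rw [Ih.map_smul, h (l+1) (by omega) (by simp at hl; omega)]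
  simp

lemma ker_Fmap {d r : ℕ} {Ih : (ℝ → ℝ) →ₗ[ℝ] ℝ} (hA1 : AssumptionA1 Ih (r:ℤ) 0) :
    LinearMap.ker (Fmap d r Ih) = ⊥ := by
  rw [LinearMap.ker_eq_bot']
  intro c hc
  have hzero : ∀ i : Fin (r+1), vecI Ih (fun x => (1+x)^(i:ℕ) • devalC r c x) +
      (if i = 0 then evalC r c (-1) else 0) = 0 := fun i => congrFun hc i
  have hcomp : ∀ m : Fin d, ∀ x, devalC r c x m = 0 := by
    intro m
    apply stmt4_key hA1
    · refine ⟨derivative (∑ j : Fin (r+1), C (c j m) * X^(j:ℕ)), ?_, ?_⟩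
      · intro n hn
        rw [coeff_derivative, finset_sum_coeff]
        rw [Finset.sum_eq_zero, zero_mul]
        intro j _
        rw [coeff_C_mul, coeff_X_pow]
        have hne : ¬ (n+1 = (j:ℕ)) := by have := j.isLt; omega
        simp [hne]
      · intro x
        rw [map_sum]
        simp only [derivative_C_mul_X_pow]
        rw [eval_finset_sum]
        simp only [eval_mul, eval_C, eval_pow, eval_X]
        show (∑ j : Fin (r+1), (((j:ℕ):ℝ) * x ^ ((j:ℕ)-1)) • c j) m = _
        rw [WithLp.ofLp_sum, Finset.sum_apply]
        exact Finset.sum_congr rfl fun j _ => by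
          show (((j:ℕ):ℝ) * x ^ ((j:ℕ)-1)) * c j m = _
          push_cast
          ring
    · intro i h1 h2
      have hI := hzero ⟨i, by omega⟩
      have hne : (⟨i, by omega⟩ : Fin (r+1)) ≠ 0 := by
        simp [Fin.ext_iff]; omega
      rw [if_neg hne, add_zero] at hI
      exact congrArg (fun v => v m) hI
  have hdz : ∀ x, devalC r c x = 0 := fun x => by ext m; exact hcomp m x
  have hdiff : Differentiable ℝ (evalC r c) := fun x => (evalC_hasDerivAt r c x).differentiableAt
  have hderiv : ∀ x, deriv (evalC r c) x = 0 := fun x => by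
    rw [(evalC_hasDerivAt r c x).deriv, hdz]
  have he0 : evalC r c (-1) = 0 := by
    have hI := hzero 0
    rw [if_pos rfl] at hI
    have hv : vecI Ih (fun x => (1+x)^((0 : Fin (r+1)):ℕ) • devalC r c x) = 0 := by
      have h5 : (fun x : ℝ => (1+x)^((0 : Fin (r+1)):ℕ) • devalC r c x)
          = fun _ => (0 : Vec d) := by
        funext x; rw [hdz]; simp
      rw [h5]
      ext m
      exact map_zero Ih
    rw [hv, zero_add] at hI
    exact hI
  have hez : ∀ x, evalC r c x = 0 := fun x =>
    (is_const_of_deriv_eq_zero hdiff hderiv x (-1)).trans he0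
  funext j; ext m
  show c j m = 0
  have hP : (∑ jj : Fin (r+1), C (c jj m) * X^(jj:ℕ)) = (0 : Polynomial ℝ) := by
    apply Polynomial.funext
    intro x
    rw [eval_finset_sum]
    simp only [eval_mul, eval_C, eval_pow, eval_X, eval_zero]
    have h6 := congrArg (fun v => v m) (hez x)
    have h7 : evalC r c x m = ∑ jj : Fin (r+1), x ^ (jj:ℕ) * c jj m := by
      show (∑ jj : Fin (r+1), x ^ (jj:ℕ) • c jj) m = _
      rw [WithLp.ofLp_sum, Finset.sum_apply]
      rfl
    rw [h7] at h6
    calc (∑ jj : Fin (r+1), c jj m * x ^ (jj:ℕ))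
        = ∑ jj : Fin (r+1), x ^ (jj:ℕ) * c jj m :=
          Finset.sum_congr rfl fun jj _ => by ring
      _ = 0 := h6
  have h8 := congrArg (fun p : Polynomial ℝ => p.coeff (j:ℕ)) hP
  simp only [finset_sum_coeff, coeff_C_mul, coeff_X_pow, coeff_zero, mul_ite, mul_one,
    mul_zero, Fin.val_eq_val, Finset.sum_ite_eq, Finset.mem_univ, if_true] at h8
  exact h8
end AuxStmt4

section
open Polynomial

/-- Lemma 3.5: the dG (`k = 0`) norm inequality for polynomials on a
mesh interval `(a, b]`. -/
theorem stmt_4 (d : ℕ) (r : ℕ)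
    (Ih : (ℝ → ℝ) →ₗ[ℝ] ℝ) (hA1 : AssumptionA1 Ih (r : ℤ) 0) :
    ∃ κ : ℝ, 0 < κ ∧ ∀ a b : ℝ, a < b → ∀ φ : ℝ → Vec d, IsPolyV (r : ℤ) φ →
      supNorm (Ioc a b) φ ≤
        κ * ∑ i ∈ Finset.range (r + 1),
          ‖locI Ih a b (fun x => (1 + Tinv a b x) ^ i • deriv φ x) +
            (if i = 0 then φ a else 0)‖ := by
  obtain ⟨K, hK, hanti⟩ := (Fmap d r Ih).exists_antilipschitzWith (ker_Fmap hA1)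
  have hK' : (0:ℝ) < K := hK
  refine ⟨((r:ℝ)+1) * K, by positivity, ?_⟩
  intro a b hab φ hφ
  have hba : b - a ≠ 0 := sub_ne_zero.mpr hab.ne'
  have hba' : (0:ℝ) < b - a := by linarith
  choose p hp1 hp2 using hφ
  set q : Fin d → Polynomial ℝ := fun m => (p m).comp (C ((b-a)/2) * X + C ((a+b)/2))
    with hqdef
  have hqnd : ∀ m, (q m).natDegree < r + 1 := by
    intro m
    have h1 : (p m).natDegree ≤ r := natDegree_le_iff_coeff_eq_zero.mpr
      (fun N hN => hp1 m N (by push_cast; omega))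
    calc (q m).natDegree ≤ (p m).natDegree * (C ((b-a)/2) * X + C ((a+b)/2)).natDegree :=
        natDegree_comp_le
      _ ≤ r * 1 := Nat.mul_le_mul h1 natDegree_linear_le
      _ < r + 1 := by omega
  set c : Fin (r+1) → Vec d := fun j => WithLp.toLp 2 (fun m => (q m).coeff (j:ℕ)) with hcdef
  have hqe : ∀ m (y : ℝ), (q m).eval y = φ (Tmap a b y) m := by
    intro m y
    have h9 : φ (Tmap a b y) m = eval (Tmap a b y) (p m) := hp2 m _
    rw [hqdef]
    simp only [eval_comp, eval_add, eval_mul, eval_C, eval_X]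
    rw [h9, show Tmap a b y = (b-a)/2 * y + (a+b)/2 from by rw [Tmap]; ring]
  have hA : ∀ y : ℝ, φ (Tmap a b y) = evalC r c y := by
    intro y; ext m
    have h10 : evalC r c y m = ∑ i ∈ Finset.range (r+1), y ^ i * (q m).coeff i := by
      have h11 : evalC r c y m
          = ∑ j : Fin (r+1), (fun n : ℕ => y ^ n * (q m).coeff n) (j:ℕ) := by
        show (∑ j : Fin (r+1), y ^ (j:ℕ) • c j) m = _
        rw [WithLp.ofLp_sum]
        exact Finset.sum_apply m Finset.univ _
      rw [h11]
      exact Fin.sum_univ_eq_sum_range (fun n : ℕ => y ^ n * (q m).coeff n) (r+1)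
    rw [← hqe m y, Polynomial.eval_eq_sum_range' (hqnd m), h10]
    exact Finset.sum_congr rfl fun i _ => by ring
  have hTinvT : ∀ y : ℝ, Tinv a b (Tmap a b y) = y := by
    intro y; rw [Tmap, Tinv]; field_simp; ring
  have hTmapT : ∀ x : ℝ, Tmap a b (Tinv a b x) = x := by
    intro x; rw [Tmap, Tinv]; field_simp; ring
  have hB : ∀ x, φ x = evalC r c (Tinv a b x) := by
    intro x
    calc φ x = φ (Tmap a b (Tinv a b x)) := by rw [hTmapT]
      _ = evalC r c (Tinv a b x) := hA _
  have hTinvD : ∀ x : ℝ, HasDerivAt (Tinv a b) (2/(b-a)) x := by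
    intro x
    have h1 : HasDerivAt (fun x : ℝ => 2*x - (a+b)) 2 x := by
      simpa using ((hasDerivAt_id x).const_mul 2).sub_const (a+b)
    have h2 := h1.div_const (b-a)
    exact h2
  have hder : ∀ x, deriv φ x = (2/(b-a)) • devalC r c (Tinv a b x) := by
    intro x
    have h2 := (evalC_hasDerivAt r c (Tinv a b x)).scomp x (hTinvD x)
    have h3 : φ = evalC r c ∘ Tinv a b := funext hB
    rw [h3]
    exact h2.deriv
  have hφa : φ a = evalC r c (-1) := by
    have h1 : Tmap a b (-1) = a := by rw [Tmap]; ring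
    rw [← h1, hA]
  have hsum : ∀ i : Fin (r+1),
      locI Ih a b (fun x => (1 + Tinv a b x) ^ (i:ℕ) • deriv φ x) +
        (if (i:ℕ) = 0 then φ a else 0) = Fmap d r Ih c i := by
    intro i
    have hT : ((fun x => (1 + Tinv a b x) ^ (i:ℕ) • deriv φ x) ∘ Tmap a b)
        = fun y => (2/(b-a)) • ((1+y) ^ (i:ℕ) • devalC r c y) := by
      funext y
      show (1 + Tinv a b (Tmap a b y)) ^ (i:ℕ) • deriv φ (Tmap a b y) = _
      rw [hder, hTinvT, smul_comm]
    have hloc : locI Ih a b (fun x => (1 + Tinv a b x) ^ (i:ℕ) • deriv φ x)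
        = vecI Ih (fun y => (1+y) ^ (i:ℕ) • devalC r c y) := by
      rw [locI, hT, vecI_smul, smul_smul,
        show (b-a)/2 * (2/(b-a)) = 1 by field_simp, one_smul]
    rw [hloc, Fmap_apply, hφa]
    congr 1
    by_cases h0 : (i:ℕ) = 0 <;> simp [h0, Fin.ext_iff]
  have hnorm1 : supNorm (Ioc a b) φ ≤ ((r:ℝ)+1) * ‖c‖ := by
    rw [_root_.supNorm]
    haveI : Nonempty (Ioc a b) := Nonempty.to_subtype (nonempty_Ioc.mpr hab)
    apply ciSup_le
    rintro ⟨x, hx⟩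
    rw [hB x]
    set y := Tinv a b x with hy
    have hy1 : -1 < y := by
      rw [hy, Tinv, lt_div_iff₀ hba']
      have := hx.1; nlinarith
    have hy2 : y ≤ 1 := by
      rw [hy, Tinv, div_le_one hba']
      have := hx.2; nlinarith
    calc ‖evalC r c y‖ ≤ ∑ j : Fin (r+1), ‖y ^ (j:ℕ) • c j‖ := norm_sum_le _ _
      _ ≤ ∑ _j : Fin (r+1), ‖c‖ := by
          apply Finset.sum_le_sum
          intro j _
          rw [norm_smul]
          have h1 : ‖y ^ (j:ℕ)‖ ≤ 1 := by
            rw [norm_pow]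
            apply pow_le_one₀ (norm_nonneg y)
            rw [Real.norm_eq_abs, abs_le]
            exact ⟨by linarith, hy2⟩
          calc ‖y ^ (j:ℕ)‖ * ‖c j‖ ≤ 1 * ‖c j‖ :=
              mul_le_mul_of_nonneg_right h1 (norm_nonneg _)
            _ = ‖c j‖ := one_mul _
            _ ≤ ‖c‖ := norm_le_pi_norm c j
      _ = ((r:ℝ)+1) * ‖c‖ := by
          rw [Finset.sum_const, Finset.card_univ, Fintype.card_fin, nsmul_eq_mul]
          push_cast; ring
  have hc2 : ‖c‖ ≤ K * ‖Fmap d r Ih c‖ := by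
    have h1 := hanti.le_mul_dist c 0
    simpa [dist_zero_right, map_zero] using h1
  have hF2 : ‖Fmap d r Ih c‖ ≤ ∑ i ∈ Finset.range (r + 1),
      ‖locI Ih a b (fun x => (1 + Tinv a b x) ^ i • deriv φ x) +
        (if i = 0 then φ a else 0)‖ := by
    rw [pi_norm_le_iff_of_nonneg (by positivity)]
    intro i
    rw [← hsum i]
    exact Finset.single_le_sum (f := fun n =>
      ‖locI Ih a b (fun x => (1 + Tinv a b x) ^ n • deriv φ x) +
        (if n = 0 then φ a else 0)‖)
      (fun n _ => norm_nonneg _) (Finset.mem_range.mpr i.isLt)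
  have hfinal : (K:ℝ) * ‖Fmap d r Ih c‖ ≤ K * ∑ i ∈ Finset.range (r + 1),
      ‖locI Ih a b (fun x => (1 + Tinv a b x) ^ i • deriv φ x) +
        (if i = 0 then φ a else 0)‖ :=
    mul_le_mul_of_nonneg_left hF2 (le_of_lt hK')
  calc supNorm (Ioc a b) φ ≤ ((r:ℝ)+1) * ‖c‖ := hnorm1
    _ ≤ ((r:ℝ)+1) * (K * ‖Fmap d r Ih c‖) :=
        mul_le_mul_of_nonneg_left hc2 (by positivity)
    _ ≤ ((r:ℝ)+1) * (K * ∑ i ∈ Finset.range (r + 1),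
          ‖locI Ih a b (fun x => (1 + Tinv a b x) ^ i • deriv φ x) +
            (if i = 0 then φ a else 0)‖) :=
        mul_le_mul_of_nonneg_left hfinal (by positivity)
    _ = ((r:ℝ)+1) * K * ∑ i ∈ Finset.range (r + 1),
          ‖locI Ih a b (fun x => (1 + Tinv a b x) ^ i • deriv φ x) +
            (if i = 0 then φ a else 0)‖ := by ring
end
end
end

section
/- Let r, k ∈ ℤ with 0 ≤ k ≤ r and suppose Assumption A1 holds. Then for every v ∈ C^{k_𝒥+1}(cl I_n, ℝ^d) there exists a unique polynomial J_n v ∈ P_r(I_n, ℝ^d) satisfying: (J_n v)^{(i)}(t_{n−1}^+) = v^{(i)}(t_{n−1}^+) for i = 0,…,⌊(k−1)/2⌋ if k ≥ 1; (J_n v)^{(i)}(t_n^-) = v^{(i)}(t_n^-) for i = 1,…,⌊k/2⌋ if k ≥ 2; and I_n[((J_n v)', φ)] + δ_{0,k}·(J_n v)(t_{n−1}^+)·φ(t_{n−1}^+) = I_n[(ℐ_n(v'), φ)] + δ_{0,k}·v(t_{n−1}^+)·φ(t_{n−1}^+) for all φ ∈ P_{r−k}(I_n, ℝ^d); i.e.,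 the local approximation operator J_n is well-defined. -/
open Set MeasureTheory
open scoped BigOperators RealInnerProductSpace

noncomputable section

namespace S6
open Polynomial
lemma iteratedDeriv_polyeval (P : ℝ[X]) (n : ℕ) :
    iteratedDeriv n (fun x => P.eval x) = fun x => (derivative^[n] P).eval x := by
  induction n with
  | zero => simp
  | succ n ih =>
    rw [iteratedDeriv_succ, ih]
    funext x
    rw [Function.iterate_succ_apply']
    exact Polynomial.deriv _

lemma hasDerivAt_vec {d : ℕ} (f : ℝ → Vec d) (f' : Vec d) (x : ℝ)
    (h : ∀ j, HasDerivAt (fun t => f t j) (f' j) x) :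
    HasDerivAt f f' x := by
  have := ((PiLp.continuousLinearEquiv 2 ℝ (fun _ : Fin d => ℝ)).symm.toContinuousLinearMap.hasFDerivAt
    (x := fun j => f x j)).comp_hasDerivAt x (hasDerivAt_pi.2 h)
  exact this

lemma iteratedDeriv_vecpoly {d : ℕ} (w : ℝ → Vec d) (P : Fin d → ℝ[X])
    (hw : ∀ x j, w x j = (P j).eval x) (n : ℕ) (x : ℝ) (j : Fin d) :
    iteratedDeriv n w x j = (derivative^[n] (P j)).eval x := by
  induction n generalizing x j with
  | zero => simp [hw]
  | succ n ih =>
    let g : ℝ → Vec d := fun t => WithLp.toLp 2 (fun j => (derivative^[n] (P j)).eval t)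
    have heq : iteratedDeriv n w = g := by
      funext t; refine PiLp.ext fun j => ?_
      exact ih t j
    let gv : Vec d := WithLp.toLp 2 (fun j => (derivative^[n+1] (P j)).eval x)
    have hg : HasDerivAt g gv x := by
      apply hasDerivAt_vec
      intro j
      have := Polynomial.hasDerivAt (derivative^[n] (P j)) x
      rw [← Function.iterate_succ_apply' derivative n (P j)] at this
      exact this
    have : iteratedDeriv (n+1) w x = gv := by
      rw [iteratedDeriv_succ, heq]
      exact hg.deriv
    rw [this]

lemma deriv_vecpoly {d : ℕ} (w : ℝ → Vec d) (P : Fin d → ℝ[X])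
    (hw : ∀ x j, w x j = (P j).eval x) (x : ℝ) (j : Fin d) :
    deriv w x j = (derivative (P j)).eval x := by
  have := iteratedDeriv_vecpoly w P hw 1 x j
  rwa [iteratedDeriv_one] at this


lemma isPolyR_of_natDegree_le {s : ℤ} (hs : 0 ≤ s) (P : ℝ[X]) (h : P.natDegree ≤ s.toNat) :
    IsPolyR s (fun x => P.eval x) :=
  ⟨P, fun n hn => coeff_eq_zero_of_natDegree_lt (by omega), fun _ => rfl⟩

lemma isPolyR_elim {s : ℤ} {φ : ℝ → ℝ} (h : IsPolyR s φ) :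
    ∃ P : ℝ[X], P.natDegree ≤ s.toNat ∧ ∀ x, φ x = P.eval x := by
  obtain ⟨P, hc, he⟩ := h
  exact ⟨P, natDegree_le_iff_coeff_eq_zero.2 fun N hN => hc N (by omega), he⟩

lemma evalQ (a b x : ℝ) : (C ((b-a)/2) * X + C ((a+b)/2)).eval x = Tmap a b x := by
  simp [Tmap]; ring

lemma tinv_tmap (a b : ℝ) (hab : a ≠ b) (x : ℝ) : Tinv a b (Tmap a b x) = x := by
  have h : b - a ≠ 0 := sub_ne_zero.2 (Ne.symm hab)
  unfold Tmap Tinv; field_simp; ring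

lemma tmap_tinv (a b : ℝ) (hab : a ≠ b) (x : ℝ) : Tmap a b (Tinv a b x) = x := by
  have h : b - a ≠ 0 := sub_ne_zero.2 (Ne.symm hab)
  unfold Tmap Tinv; field_simp; ring

lemma pow_dvd_of_root_derivs {P : ℝ[X]} (hP : P ≠ 0) {t : ℝ} {m : ℕ}
    (h : ∀ i < m, (derivative^[i] P).eval t = 0) : (X - C t) ^ m ∣ P := by
  rcases Nat.eq_zero_or_pos m with hm | hm
  · simp [hm]
  have hlt : m - 1 < rootMultiplicity t P := by
    apply lt_rootMultiplicity_of_isRoot_iterate_derivative_of_mem_nonZeroDivisors' hP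
    · intro i hi; exact h i (by omega)
    · intro i _ hi0
      exact mem_nonZeroDivisors_of_ne_zero (Nat.cast_ne_zero.2 hi0)
  exact (pow_dvd_pow _ (by omega)).trans (P.pow_rootMultiplicity_dvd t)

lemma inj_core (r k : ℤ) (h0k : 0 ≤ k) (hkr : k ≤ r)
    (Ih : (ℝ → ℝ) →ₗ[ℝ] ℝ) (hA1 : AssumptionA1 Ih r k) (a b : ℝ) (hab : a < b)
    (P : ℝ[X]) (hdeg : P.natDegree ≤ r.toNat)
    (h1 : ∀ i : ℕ, 1 ≤ k → (i:ℤ) ≤ (k-1).fdiv 2 → (derivative^[i] P).eval a = 0)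
    (h2 : ∀ i : ℕ, 2 ≤ k → 1 ≤ i → (i:ℤ) ≤ k.fdiv 2 → (derivative^[i] P).eval b = 0)
    (h3 : ∀ φ : ℝ → ℝ, IsPolyR (r-k) φ →
      (b-a)/2 * Ih (fun x => (derivative P).eval (Tmap a b x) * φ (Tmap a b x)) +
        (if k = 0 then P.eval a else 0) * φ a = 0) :
    P = 0 := by
  have e1 : (k-1).fdiv 2 = (k-1)/2 := Int.fdiv_eq_ediv_of_nonneg _ (by norm_num)
  have e2 : k.fdiv 2 = k/2 := Int.fdiv_eq_ediv_of_nonneg _ (by norm_num)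
  have hba : b - a ≠ 0 := sub_ne_zero.2 hab.ne'
  have hba2 : (b - a)/2 ≠ 0 := div_ne_zero hba two_ne_zero
  have hrk : (0:ℤ) ≤ r - k := by omega
  have hone : IsPolyR (r - k) (fun _ : ℝ => 1) :=
    ⟨1, fun n hn => by rw [coeff_one]; simp only [ite_eq_right_iff]; omega, fun x => by simp⟩
  have hPa0 : 1 ≤ k → P.eval a = 0 := by
    intro hk
    have := h1 0 hk (by rw [e1]; omega)
    simpa using this
  by_cases hq : derivative P = 0
  · obtain ⟨c0, rfl⟩ : ∃ c0, P = C c0 :=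
      ⟨P.coeff 0, eq_C_of_natDegree_eq_zero (natDegree_eq_zero_of_derivative_eq_zero hq)⟩
    rcases eq_or_ne k 0 with hk0 | hk0
    · have h30 := h3 _ hone
      have hz : (fun x => (derivative (C c0 : ℝ[X])).eval (Tmap a b x) * (1:ℝ)) = 0 := by
        funext x; simp
      rw [hz, map_zero] at h30
      simp [hk0] at h30
      simp [h30]
    · have := hPa0 (by omega)
      simp only [eval_C] at this
      simp [this]
  · -- derivative P ≠ 0
    have hPnd : 1 ≤ P.natDegree := by
      by_contra hcon
      push_neg at hcon
      obtain ⟨c0, rfl⟩ : ∃ c0, P = C c0 := ⟨P.coeff 0, eq_C_of_natDegree_eq_zero (by omega)⟩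
      simp at hq
    have hr1 : (1:ℤ) ≤ r := by omega
    set q := derivative P with hqdef
    set m : ℤ := max 1 k with hm
    set μs : ℕ := if k = 0 then 0 else ((k-1).fdiv 2).toNat with hμs
    set ex : ℕ := if k = 0 then 1 else 0 with hex
    set β : ℕ := (k.fdiv 2).toNat with hβ
    have hμz : k ≠ 0 → (μs:ℤ) = (k-1)/2 := by
      intro hk0
      rw [hμs, if_neg hk0, e1, Int.toNat_of_nonneg (by omega)]
    have hμz0 : k = 0 → μs = 0 := fun hk0 => by rw [hμs, if_pos hk0]
    have hβz : (β:ℤ) = k/2 := by rw [hβ, e2, Int.toNat_of_nonneg (by omega)]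
    have hqd : q.natDegree ≤ r.toNat - 1 := le_trans (natDegree_derivative_le P) (by omega)
    have hdvda : (X - C a)^μs ∣ q := by
      rcases eq_or_ne k 0 with hk0 | hk0
      · rw [hμz0 hk0, pow_zero]; exact one_dvd _
      apply pow_dvd_of_root_derivs hq
      intro i hi
      rw [hqdef, ← Function.iterate_succ_apply]
      apply h1 (i+1) (by omega)
      have := hμz hk0
      rw [e1]; push_cast; omega
    have hdvdb : (X - C b)^β ∣ q := by
      apply pow_dvd_of_root_derivs hq
      intro i hi
      have hk2 : 2 ≤ k := by omega
      rw [hqdef, ← Function.iterate_succ_apply]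
      apply h2 (i+1) hk2 (by omega)
      rw [e2]; push_cast; omega
    have hcop : IsCoprime ((X - C a)^μs) ((X - C b)^β) :=
      (isCoprime_X_sub_C_of_isUnit_sub
        (IsUnit.mk0 _ (sub_ne_zero.2 hab.ne))).pow
    obtain ⟨ψp, hψp⟩ := hcop.mul_dvd hdvda hdvdb
    have hψ0 : ψp ≠ 0 := by
      rintro rfl
      rw [mul_zero] at hψp
      exact hq hψp
    have hqdeg : q.natDegree = μs + β + ψp.natDegree := by
      rw [hψp, natDegree_mul (mul_ne_zero (pow_ne_zero _ (X_sub_C_ne_zero a))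
        (pow_ne_zero _ (X_sub_C_ne_zero b))) hψ0,
        natDegree_mul (pow_ne_zero _ (X_sub_C_ne_zero a)) (pow_ne_zero _ (X_sub_C_ne_zero b)),
        natDegree_pow, natDegree_pow, natDegree_X_sub_C, natDegree_X_sub_C]
      omega
    have hrm : (0:ℤ) ≤ r - m := by omega
    have hnψ : ψp.natDegree ≤ (r - m).toNat := by
      rcases eq_or_ne k 0 with hk0 | hk0
      · have := hμz0 hk0
        have hβ0 : (β:ℤ) = 0 := by rw [hβz]; omega
        simp only [hm, hk0] at *
        omega
      · have := hμz hk0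
        have hmk : m = k := by omega
        omega
    -- the mapped ψ function
    set ψf : ℝ → ℝ := fun x => ψp.eval (Tmap a b x) with hψf
    have hψfp : IsPolyR (r - m) ψf := by
      have heq : ψf = fun x => (ψp.comp (C ((b-a)/2) * X + C ((a+b)/2))).eval x := by
        funext x; rw [eval_comp, evalQ]
      rw [heq]
      apply isPolyR_of_natDegree_le hrm
      refine le_trans natDegree_comp_le ?_
      rw [natDegree_linear hba2]
      omega
    have hexp : μs + ex = ((k-1).fdiv 2).natAbs := by
      rcases eq_or_ne k 0 with hk0 | hk0
      · have := hμz0 hk0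
        subst hk0
        simp [hex, this, e1]
      · have := hμz hk0
        rw [hex, if_neg hk0, e1]
        omega
    have hA1c : ∀ x, ψf x = 0 := by
      apply hA1 ψf (by rwa [hm] at hψfp)
      intro φ hφ
      obtain ⟨Pφ, hPφd, hPφe⟩ := isPolyR_elim hφ
      set φt : ℝ → ℝ := fun x => (x - a)^ex * Pφ.eval (Tinv a b x) with hφt
      have hφtp : IsPolyR (r - k) φt := by
        have heq : φt = fun x =>
            (((X - C a)^ex) * Pφ.comp (C (2/(b-a)) * X + C (-(a+b)/(b-a)))).eval x := by
          funext x
          rw [hφt]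
          simp only [eval_mul, eval_pow, eval_sub, eval_X, eval_C, eval_comp, eval_add,
            eval_mul, eval_C, eval_X]
          rw [Tinv]
          ring_nf
        rw [heq]
        apply isPolyR_of_natDegree_le hrk
        refine le_trans (natDegree_mul_le) ?_
        have b1 : natDegree ((X - C a)^ex) ≤ ex := by
          refine le_trans natDegree_pow_le ?_
          simp [natDegree_X_sub_C]
        have b2 : natDegree (Pφ.comp (C (2/(b-a)) * X + C (-(a+b)/(b-a)))) ≤ Pφ.natDegree := by
          refine le_trans natDegree_comp_le ?_
          refine le_trans (Nat.mul_le_mul_left _ natDegree_linear_le) ?_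
          omega
        have hkcase : ex + (r - m).toNat ≤ (r-k).toNat := by
          rcases eq_or_ne k 0 with hk0 | hk0
          · rw [hex, if_pos hk0]; simp [hm, hk0]; omega
          · rw [hex, if_neg hk0]
            have : m = k := by omega
            omega
        omega
      have h3t := h3 φt hφtp
      have hzero : (if k = 0 then P.eval a else 0) * φt a = 0 := by
        rcases eq_or_ne k 0 with hk0 | hk0
        · rw [hφt]; simp [hex, hk0]
        · simp [hk0]
      rw [hzero, add_zero] at h3t
      set CC : ℝ := ((b-a)/2)^(μs+β+ex) * (-1:ℝ)^β with hCC
      have hCC0 : CC ≠ 0 := mul_ne_zero (pow_ne_zero _ hba2) (pow_ne_zero _ (by norm_num))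
      have key : (fun x => q.eval (Tmap a b x) * φt (Tmap a b x)) =
          CC • (fun x => (1-x)^(k.fdiv 2).toNat * (1+x)^((k-1).fdiv 2).natAbs *
            (ψf x * φ x)) := by
        funext x
        have t1 : Tmap a b x - a = (b-a)/2 * (1+x) := by unfold Tmap; ring
        have t2 : Tmap a b x - b = (b-a)/2 * (1-x) * (-1) := by unfold Tmap; ring
        have t3 : Tinv a b (Tmap a b x) = x := tinv_tmap a b hab.ne x
        simp only [Pi.smul_apply, smul_eq_mul]
        rw [hψp]
        simp only [hφt]
        beta_reduce
        simp only [eval_mul, eval_pow, eval_sub, eval_X, eval_C]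
        rw [t1, t2, t3, ← hPφe, ← hexp, ← hβ, hCC]
        simp only [hψf]
        beta_reduce
        simp only [mul_pow, pow_add]
        ring
      rw [key, _root_.map_smul, smul_eq_mul] at h3t
      rcases mul_eq_zero.1 h3t with h | h
      · exact absurd h hba2
      rcases mul_eq_zero.1 h with h | h
      · exact absurd h hCC0
      exact h
    have hψpz : ψp = 0 := by
      apply Polynomial.funext
      intro y
      have := hA1c (Tinv a b y)
      rw [hψf] at this
      simp only at this
      rw [tmap_tinv a b hab.ne y] at this
      simpa using this
    exact absurd (by rw [hψp, hψpz, mul_zero]) hq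



def SCond (Ih : (ℝ → ℝ) →ₗ[ℝ] ℝ) (r k : ℤ) (a b : ℝ) (A B : ℕ → ℝ) (g : ℝ → ℝ) (c : ℝ)
    (P : ℝ[X]) : Prop :=
  P.natDegree ≤ r.toNat ∧
  (1 ≤ k → ∀ i : ℕ, (i : ℤ) ≤ (k - 1).fdiv 2 → (derivative^[i] P).eval a = A i) ∧
  (2 ≤ k → ∀ i : ℕ, 1 ≤ i → (i : ℤ) ≤ k.fdiv 2 → (derivative^[i] P).eval b = B i) ∧
  (∀ φ : ℝ → ℝ, IsPolyR (r - k) φ →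
    (b - a) / 2 * Ih (fun x => (derivative P).eval (Tmap a b x) * φ (Tmap a b x)) +
        (if k = 0 then P.eval a * φ a else 0) =
      (b - a) / 2 * Ih (fun x => g (Tmap a b x) * φ (Tmap a b x)) +
        (if k = 0 then c * φ a else 0))

lemma var_extend (Ih : (ℝ → ℝ) →ₗ[ℝ] ℝ) (a b : ℝ) (s : ℤ) (H : ℝ → ℝ) (e c0 : ℝ)
    (h : ∀ j : ℕ, j ≤ s.toNat → c0 * Ih (fun x => H x * (Tmap a b x)^j) + e * a^j = 0) :
    ∀ φ : ℝ → ℝ, IsPolyR s φ → c0 * Ih (fun x => H x * φ (Tmap a b x)) + e * φ a = 0 := by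
  intro φ hφ
  obtain ⟨P, hd, he⟩ := isPolyR_elim hφ
  have hev : ∀ x : ℝ, P.eval x = ∑ j ∈ Finset.range (s.toNat+1), P.coeff j * x^j :=
    fun x => eval_eq_sum_range' (by omega) x
  have hfun : (fun x => H x * φ (Tmap a b x)) =
      ∑ j ∈ Finset.range (s.toNat+1), P.coeff j • (fun x => H x * (Tmap a b x)^j) := by
    funext x
    rw [Finset.sum_apply]
    rw [he, hev]
    rw [Finset.mul_sum]
    exact Finset.sum_congr rfl fun j _ => by simp only [Pi.smul_apply, smul_eq_mul]; ring
  rw [hfun, map_sum]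
  simp only [_root_.map_smul, smul_eq_mul]
  rw [he a, hev a, Finset.mul_sum, Finset.mul_sum, ← Finset.sum_add_distrib]
  apply Finset.sum_eq_zero
  intro j hj
  have h0 := h j (by simp only [Finset.mem_range] at hj; omega)
  linear_combination P.coeff j * h0

theorem scalar_core (r k : ℤ) (h0k : 0 ≤ k) (hkr : k ≤ r)
    (Ih : (ℝ → ℝ) →ₗ[ℝ] ℝ) (hA1 : AssumptionA1 Ih r k) (a b : ℝ) (hab : a < b)
    (A B : ℕ → ℝ) (g : ℝ → ℝ) (c : ℝ) :
    ∃! P : ℝ[X], SCond Ih r k a b A B g c P := by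
  have e1 : (k-1).fdiv 2 = (k-1)/2 := Int.fdiv_eq_ediv_of_nonneg _ (by norm_num)
  have e2 : k.fdiv 2 = k/2 := Int.fdiv_eq_ediv_of_nonneg _ (by norm_num)
  have hba : b - a ≠ 0 := sub_ne_zero.2 hab.ne'
  -- uniqueness via inj_core
  have huniq : ∀ P1 P2 : ℝ[X], SCond Ih r k a b A B g c P1 → SCond Ih r k a b A B g c P2 →
      P1 = P2 := by
    intro P1 P2 hP1 hP2
    have h0 : P1 - P2 = 0 := by
      apply inj_core r k h0k hkr Ih hA1 a b hab
      · exact le_trans (natDegree_sub_le P1 P2) (max_le hP1.1 hP2.1)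
      · intro i hk hi
        rw [Polynomial.iterate_derivative_sub, eval_sub, hP1.2.1 hk i hi, hP2.2.1 hk i hi,
          sub_self]
      · intro i hk h1i hi
        rw [Polynomial.iterate_derivative_sub, eval_sub, hP1.2.2.1 hk i h1i hi,
          hP2.2.2.1 hk i h1i hi, sub_self]
      · intro φ hφ
        have u1 := hP1.2.2.2 φ hφ
        have u2 := hP2.2.2.2 φ hφ
        have hfe : (fun x => (derivative (P1 - P2)).eval (Tmap a b x) * φ (Tmap a b x)) =
            (fun x => (derivative P1).eval (Tmap a b x) * φ (Tmap a b x)) -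
            (fun x => (derivative P2).eval (Tmap a b x) * φ (Tmap a b x)) := by
          funext x
          simp only [derivative_sub, eval_sub, Pi.sub_apply]
          ring
        rw [hfe, map_sub]
        simp only [eval_sub]
        split_ifs with hk0
        · simp only [hk0, if_pos] at u1 u2
          linear_combination u1 - u2
        · simp only [if_neg hk0] at u1 u2
          linear_combination u1 - u2
    exact sub_eq_zero.1 h0
  -- existence via finite-dimensional linear algebra
  have hex : ∃ P : ℝ[X], SCond Ih r k a b A B g c P := by
    set n : ℕ := r.toNat + 1 with hn
    set μ : ℕ := ((k-1).fdiv 2).toNat with hμ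
    set β : ℕ := (k.fdiv 2).toNat with hβ
    set γ : ℕ := (r-k).toNat + 1 with hγ
    set α : ℕ := if k = 0 then 0 else μ + 1 with hα
    have hsum : α + β + γ = n := by
      rcases eq_or_ne k 0 with hk0 | hk0
      · rw [hα, if_pos hk0, hβ, hγ, hn, e2]
        omega
      · rw [hα, if_neg hk0, hβ, hγ, hn, hμ, e1, e2]
        omega
    let Dm : ℝ[X] →ₗ[ℝ] ℝ[X] := derivative
    let M : ℕ → (ℝ[X] →ₗ[ℝ] (ℝ → ℝ)) := fun j =>
      { toFun := fun P x => P.eval (Tmap a b x) * (Tmap a b x)^j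
        map_add' := fun P Q => by funext x; simp [add_mul]
        map_smul' := fun s P => by funext x; simp [smul_eq_mul]; ring }
    let L1 : ℝ[X] →ₗ[ℝ] (Fin α → ℝ) := LinearMap.pi fun i => (leval a).comp (Dm ^ (i:ℕ))
    let L2 : ℝ[X] →ₗ[ℝ] (Fin β → ℝ) := LinearMap.pi fun i => (leval b).comp (Dm ^ ((i:ℕ)+1))
    let L3 : ℝ[X] →ₗ[ℝ] (Fin γ → ℝ) := LinearMap.pi fun j =>
      ((b-a)/2) • (Ih.comp ((M (j:ℕ)).comp Dm)) +
        (if k = 0 then (a^(j:ℕ)) • leval a else 0)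
    let W := Polynomial.degreeLT ℝ n
    let L : W →ₗ[ℝ] ((Fin α → ℝ) × (Fin β → ℝ) × (Fin γ → ℝ)) :=
      (L1.comp W.subtype).prod ((L2.comp W.subtype).prod (L3.comp W.subtype))
    have happ : ∀ (Q : ℝ[X]) (hQ : Q ∈ W), L ⟨Q, hQ⟩ =
        (fun i : Fin α => (derivative^[(i:ℕ)] Q).eval a,
         fun i : Fin β => (derivative^[(i:ℕ)+1] Q).eval b,
         fun j : Fin γ => (b-a)/2 * Ih (fun x =>
             (derivative Q).eval (Tmap a b x) * (Tmap a b x)^(j:ℕ)) +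
           (if k = 0 then Q.eval a * a^(j:ℕ) else 0)) := by
      intro Q hQ
      refine Prod.ext ?_ (Prod.ext ?_ ?_)
      · funext i
        have hc : (L ⟨Q, hQ⟩).1 = L1 Q := rfl
        rw [hc]
        simp [L1, Dm, Module.End.pow_apply]
      · funext i
        have hc : (L ⟨Q, hQ⟩).2.1 = L2 Q := rfl
        rw [hc]
        simp [L2, Dm, Module.End.pow_apply]
      · funext j
        have hc : (L ⟨Q, hQ⟩).2.2 = L3 Q := rfl
        rw [hc]
        simp only [L3, LinearMap.pi_apply, LinearMap.add_apply, LinearMap.smul_apply,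
          LinearMap.comp_apply, smul_eq_mul, M, LinearMap.coe_mk, AddHom.coe_mk, Dm,
          leval_apply]
        rw [apply_ite (fun f : ℝ[X] →ₗ[ℝ] ℝ => f Q)]
        simp only [LinearMap.smul_apply, LinearMap.zero_apply, leval_apply, smul_eq_mul]
        split_ifs <;> ring
    have hmemW : ∀ Q : ℝ[X], Q.natDegree ≤ r.toNat → Q ∈ W := by
      intro Q hQ
      rw [Polynomial.mem_degreeLT]
      calc degree Q ≤ (Q.natDegree : WithBot ℕ) := degree_le_natDegree
        _ < (n : WithBot ℕ) := by exact_mod_cast (by omega : Q.natDegree < n)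
    have hdegW : ∀ Q : ℝ[X], Q ∈ W → Q.natDegree ≤ r.toNat := by
      intro Q hQ
      rw [Polynomial.mem_degreeLT] at hQ
      apply natDegree_le_iff_coeff_eq_zero.2
      intro N hN
      apply coeff_eq_zero_of_degree_lt
      exact lt_of_lt_of_le hQ (by exact_mod_cast (by omega : n ≤ N))
    have hμz1 : 1 ≤ k → (μ:ℤ) = (k-1)/2 := fun hk => by
      rw [hμ, e1, Int.toNat_of_nonneg (by omega)]
    have hβz : (β:ℤ) = k/2 := by rw [hβ, e2, Int.toNat_of_nonneg (by omega)]
    have hinj : Function.Injective L := by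
      rw [← LinearMap.ker_eq_bot]
      apply (Submodule.eq_bot_iff _).2
      intro x hx
      obtain ⟨P, hPm⟩ := x
      rw [LinearMap.mem_ker, happ P hPm] at hx
      simp only [Prod.ext_iff, Prod.fst_zero, Prod.snd_zero] at hx
      obtain ⟨hx1, hx2, hx3⟩ := hx
      have hP0 : P = 0 := by
        apply inj_core r k h0k hkr Ih hA1 a b hab P (hdegW P hPm)
        · intro i hk hi
          have hia : i < α := by
            rw [hα, if_neg (by omega : ¬ k = 0)]
            rw [e1] at hi
            have := hμz1 hk
            omega
          simpa using congr_fun hx1 ⟨i, hia⟩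
        · intro i hk h1i hi
          have hlt : i - 1 < β := by rw [e2] at hi; omega
          have hc := congr_fun hx2 ⟨i-1, hlt⟩
          simp only [Pi.zero_apply] at hc
          rwa [show i - 1 + 1 = i by omega] at hc
        · have hmon : ∀ j : ℕ, j ≤ (r-k).toNat →
              (b-a)/2 * Ih (fun x => (derivative P).eval (Tmap a b x) * (Tmap a b x)^j) +
                (if k = 0 then P.eval a else 0) * a^j = 0 := by
            intro j hj
            have hc := congr_fun hx3 ⟨j, by omega⟩
            simp only [Pi.zero_apply] at hc
            rcases eq_or_ne k 0 with hk0 | hk0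
            · simp only [if_pos hk0] at hc ⊢; linarith
            · simp only [if_neg hk0] at hc ⊢; linarith
          intro φ hφ
          exact var_extend Ih a b (r-k) (fun x => (derivative P).eval (Tmap a b x))
            (if k = 0 then P.eval a else 0) ((b-a)/2) hmon φ hφ
      exact Subtype.ext hP0
    have hfinW : FiniteDimensional ℝ W := Module.Finite.equiv (Polynomial.degreeLTEquiv ℝ n).symm
    have hrW : Module.finrank ℝ W = n := by
      rw [LinearEquiv.finrank_eq (Polynomial.degreeLTEquiv ℝ n)]
      simp
    have hrY : Module.finrank ℝ ((Fin α → ℝ) × (Fin β → ℝ) × (Fin γ → ℝ)) = n := by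
      simp only [Module.finrank_prod, Module.finrank_pi, Fintype.card_fin]
      omega
    have hsurj : Function.Surjective L := by
      rw [← LinearMap.range_eq_top]
      apply Submodule.eq_top_of_finrank_eq
      rw [LinearMap.finrank_range_of_inj hinj, hrW, hrY]
    obtain ⟨x0, hx0⟩ := hsurj
      (fun i : Fin α => A (i:ℕ),
       fun i : Fin β => B ((i:ℕ)+1),
       fun j : Fin γ => (b-a)/2 * Ih (fun x => g (Tmap a b x) * (Tmap a b x)^(j:ℕ)) +
         (if k = 0 then c * a^(j:ℕ) else 0))
    obtain ⟨P, hPm⟩ := x0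
    rw [happ P hPm] at hx0
    simp only [Prod.ext_iff] at hx0
    obtain ⟨hx1, hx2, hx3⟩ := hx0
    refine ⟨P, hdegW P hPm, ?_, ?_, ?_⟩
    · intro hk i hi
      have hia : i < α := by
        rw [hα, if_neg (by omega : ¬ k = 0)]
        rw [e1] at hi
        have := hμz1 hk
        omega
      simpa using congr_fun hx1 ⟨i, hia⟩
    · intro hk i h1i hi
      have hlt : i - 1 < β := by rw [e2] at hi; omega
      have hc := congr_fun hx2 ⟨i-1, hlt⟩
      simp only at hc
      rwa [show i - 1 + 1 = i by omega] at hc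
    · intro φ hφ
      have hmon : ∀ j : ℕ, j ≤ (r-k).toNat →
          (b-a)/2 * Ih (fun x =>
              ((derivative P).eval (Tmap a b x) - g (Tmap a b x)) * (Tmap a b x)^j) +
            (if k = 0 then P.eval a - c else 0) * a^j = 0 := by
        intro j hj
        have hj3 := congr_fun hx3 ⟨j, by omega⟩
        simp only at hj3
        have hfe : (fun x =>
            ((derivative P).eval (Tmap a b x) - g (Tmap a b x)) * (Tmap a b x)^j) =
            (fun x => (derivative P).eval (Tmap a b x) * (Tmap a b x)^j) -
            (fun x => g (Tmap a b x) * (Tmap a b x)^j) := by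
          funext x; simp [sub_mul]
        rw [hfe, map_sub]
        rcases eq_or_ne k 0 with hk0 | hk0
        · simp only [if_pos hk0] at hj3 ⊢; linarith
        · simp only [if_neg hk0] at hj3 ⊢; linarith
      have hv := var_extend Ih a b (r-k)
        (fun x => (derivative P).eval (Tmap a b x) - g (Tmap a b x))
        (if k = 0 then P.eval a - c else 0) ((b-a)/2) hmon φ hφ
      beta_reduce at hv
      have hfe : (fun x =>
          ((derivative P).eval (Tmap a b x) - g (Tmap a b x)) * φ (Tmap a b x)) =
          (fun x => (derivative P).eval (Tmap a b x) * φ (Tmap a b x)) -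
          (fun x => g (Tmap a b x) * φ (Tmap a b x)) := by
        funext x; simp [sub_mul]
      rw [hfe, map_sub] at hv
      rcases eq_or_ne k 0 with hk0 | hk0
      · simp only [if_pos hk0] at hv ⊢; linarith
      · simp only [if_neg hk0] at hv ⊢; linarith

  obtain ⟨P, hP⟩ := hex
  exact ⟨P, hP, fun Q hQ => huniq Q P hQ hP⟩


end S6

/-- Lemma 4.1: the local approximation operator `J_n` is well-defined:
for every `v ∈ C^{k_𝒥+1}(cl I_n, ℝ^d)` there is a unique `J_n v ∈ P_r(I_n, ℝ^d)`
satisfying the defining conditions. -/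
theorem stmt_6 (d : ℕ) (r k : ℤ) (h0k : 0 ≤ k) (hkr : k ≤ r) (kI kIc : ℕ)
    (Ih : (ℝ → ℝ) →ₗ[ℝ] ℝ) (Ic : (ℝ → ℝ) →ₗ[ℝ] (ℝ → ℝ))
    (hA1 : AssumptionA1 Ih r k) (a b : ℝ) (hab : a < b) :
    ∀ v : ℝ → Vec d, ContDiffOn ℝ ((kJ k kI kIc + 1 : ℕ) : ℕ∞) v (Icc a b) →
      ∃! w : ℝ → Vec d, JCondLoc d Ih Ic r k a b v w := by
  intro v _hv
  classical
  have hsc : ∀ j : Fin d, ∃! P : Polynomial ℝ, S6.SCond Ih r k a b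
      (fun i => (iteratedDerivWithin i v (Icc a b) a) j)
      (fun i => (iteratedDerivWithin i v (Icc a b) b) j)
      (fun x => (locOp Ic a b (derivWithin v (Icc a b)) x) j) ((v a) j) P :=
    fun j => S6.scalar_core r k h0k hkr Ih hA1 a b hab _ _ _ _
  choose P hP using fun j => (hsc j).exists
  set w : ℝ → Vec d := fun t => WithLp.toLp 2 (fun j => (P j).eval t) with hwdef
  have hwe : ∀ (x : ℝ) (j : Fin d), w x j = (P j).eval x := fun x j => rfl
  have hr0 : (0:ℤ) ≤ r := le_trans h0k hkr
  have hip : ∀ (u u' : Vec d), ⟪u, u'⟫ = ∑ j, u j * u' j := fun u u' => by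
    simp [PiLp.inner_apply, RCLike.inner_apply, mul_comm]
  have locIs_def : ∀ g : ℝ → ℝ, locIs Ih a b g = (b-a)/2 * Ih (g ∘ Tmap a b) :=
    fun g => rfl
  have hJw : JCondLoc d Ih Ic r k a b v w := by
    refine ⟨?_, ?_, ?_, ?_⟩
    · intro j
      exact S6.isPolyR_of_natDegree_le hr0 (P j) (hP j).1
    · intro hk i hi
      refine PiLp.ext fun j => ?_
      rw [S6.iteratedDeriv_vecpoly w P hwe i a j]
      exact (hP j).2.1 hk i hi
    · intro hk i h1i hi
      refine PiLp.ext fun j => ?_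
      rw [S6.iteratedDeriv_vecpoly w P hwe i b j]
      exact (hP j).2.2.1 hk i h1i hi
    · intro φ hφ
      have key : ∀ j : Fin d,
          (b - a) / 2 * Ih (fun x =>
              (Polynomial.derivative (P j)).eval (Tmap a b x) * φ (Tmap a b x) j) +
              (if k = 0 then (P j).eval a * φ a j else 0) =
            (b - a) / 2 * Ih (fun x =>
                (locOp Ic a b (derivWithin v (Icc a b)) (Tmap a b x)) j * φ (Tmap a b x) j) +
              (if k = 0 then (v a) j * φ a j else 0) := by
        intro j
        exact (hP j).2.2.2 (fun x => φ x j) (hφ j)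
      have hL : locIs Ih a b (fun x => ⟪deriv w x, φ x⟫) =
          ∑ j, (b - a) / 2 * Ih (fun x =>
            (Polynomial.derivative (P j)).eval (Tmap a b x) * φ (Tmap a b x) j) := by
        have hfe : ((fun x => ⟪deriv w x, φ x⟫) ∘ Tmap a b) =
            ∑ j : Fin d, (fun x =>
              (Polynomial.derivative (P j)).eval (Tmap a b x) * φ (Tmap a b x) j) := by
          funext x
          simp only [Function.comp_apply, Finset.sum_apply]
          rw [hip]
          exact Finset.sum_congr rfl fun j _ => by
            rw [S6.deriv_vecpoly w P hwe]
        rw [locIs_def, hfe, map_sum, Finset.mul_sum]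
      have hR : locIs Ih a b (fun x => ⟪locOp Ic a b (derivWithin v (Icc a b)) x, φ x⟫) =
          ∑ j, (b - a) / 2 * Ih (fun x =>
            (locOp Ic a b (derivWithin v (Icc a b)) (Tmap a b x)) j * φ (Tmap a b x) j) := by
        have hfe : ((fun x => ⟪locOp Ic a b (derivWithin v (Icc a b)) x, φ x⟫) ∘ Tmap a b) =
            ∑ j : Fin d, (fun x =>
              (locOp Ic a b (derivWithin v (Icc a b)) (Tmap a b x)) j * φ (Tmap a b x) j) := by
          funext x
          simp only [Function.comp_apply, Finset.sum_apply]
          rw [hip]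
        rw [locIs_def, hfe, map_sum, Finset.mul_sum]
      have hif1 : (if k = 0 then ⟪w a, φ a⟫ else 0) =
          ∑ j, (if k = 0 then (P j).eval a * φ a j else 0) := by
        split_ifs with hk0
        · rw [hip]
        · simp
      have hif2 : (if k = 0 then ⟪v a, φ a⟫ else 0) =
          ∑ j, (if k = 0 then (v a) j * φ a j else 0) := by
        split_ifs with hk0
        · rw [hip]
        · simp
      rw [hL, hR, hif1, hif2, ← Finset.sum_add_distrib, ← Finset.sum_add_distrib]
      exact Finset.sum_congr rfl fun j _ => key j
  refine ⟨w, hJw, ?_⟩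
  intro w' hw'
  obtain ⟨hpolyV, ha', hb', hvar'⟩ := hw'
  choose P' hP'd hP'e using fun j => S6.isPolyR_elim (hpolyV j)
  have hwe' : ∀ (x : ℝ) (j : Fin d), w' x j = (P' j).eval x := fun x j => hP'e j x
  have hip : ∀ (u u' : Vec d), ⟪u, u'⟫ = ∑ j, u j * u' j := fun u u' => by
    simp [PiLp.inner_apply, RCLike.inner_apply, mul_comm]
  have hSC : ∀ j, S6.SCond Ih r k a b
      (fun i => (iteratedDerivWithin i v (Icc a b) a) j)
      (fun i => (iteratedDerivWithin i v (Icc a b) b) j)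
      (fun x => (locOp Ic a b (derivWithin v (Icc a b)) x) j) ((v a) j) (P' j) := by
    intro j
    refine ⟨hP'd j, ?_, ?_, ?_⟩
    · intro hk i hi
      rw [← S6.iteratedDeriv_vecpoly w' P' hwe' i a j]
      exact congrArg (fun u : Vec d => u j) (ha' hk i hi)
    · intro hk i h1i hi
      rw [← S6.iteratedDeriv_vecpoly w' P' hwe' i b j]
      exact congrArg (fun u : Vec d => u j) (hb' hk i h1i hi)
    · intro φ0 hφ0
      set φv : ℝ → Vec d := fun x => WithLp.toLp 2 (fun j' => if j' = j then φ0 x else 0) with hφv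
      have hφvp : IsPolyV (r - k) φv := by
        intro j'
        rcases eq_or_ne j' j with rfl | hne
        · simpa [φv] using hφ0
        · exact ⟨0, by simp, fun x => by simp [φv, hne]⟩
      have hiv : ∀ (u : Vec d) (y : ℝ), ⟪u, φv y⟫ = u j * φ0 y := by
        intro u y
        rw [hip]
        simp [φv, mul_ite, mul_zero, Finset.sum_ite_eq']
      have hv := hvar' φv hφvp
      have hf1 : (fun x => ⟪deriv w' x, φv x⟫) =
          (fun x => (Polynomial.derivative (P' j)).eval x * φ0 x) := by
        funext x
        rw [hiv, S6.deriv_vecpoly w' P' hwe']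
      have hf2 : (fun x => ⟪locOp Ic a b (derivWithin v (Icc a b)) x, φv x⟫) =
          (fun x => (locOp Ic a b (derivWithin v (Icc a b)) x) j * φ0 x) := by
        funext x
        rw [hiv]
      rw [hf1, hf2] at hv
      rcases eq_or_ne k 0 with hk0 | hk0
      · simp only [if_pos hk0] at hv ⊢
        rw [hiv, hiv, hwe'] at hv
        exact hv
      · simp only [if_neg hk0] at hv ⊢
        exact hv
  have hPP : ∀ j, P' j = P j := fun j => (hsc j).unique (hSC j) (hP j)
  funext x
  refine PiLp.ext fun j => ?_
  rw [hwe' x j, hPP j]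

end
end

section
/- Let r, k ∈ ℤ with 0 ≤ k ≤ r and i ∈ ℕ₀. Suppose the local operator ℐ_n is a projection onto polynomials of maximal degree r_ℐ (Assumption A6), that the local integrator I_n integrates exactly all polynomials of degree at most ρ_ex, and that ∫_{I_n} (φ − ℐ_nφ)(t)·ψ(t) dt = 0 for all φ ∈ P_σ(I_n) and all ψ ∈ P_i(I_n). Then for every φ ∈ P_m(I_n) with m ≤ max{r_ℐ, min{ρ_ex − i, σ}} and every ψ ∈ P_i(I_n): I_n[φ·ψ] = I_n[(ℐ_nφ)·ψ]. In particular, r^𝓘_{ℐ,i} ≥ max{r_ℐ, min{r_ex^𝓘 − i, r^int_{ℐ,i}}}, and without Assumption A6 one still always has r^𝓘_{ℐ,i} ≥ r_ℐ. -/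
open Set MeasureTheory
open scoped BigOperators RealInnerProductSpace

noncomputable section

lemma IsPolyR.mono' {s t : ℤ} {φ : ℝ → ℝ} (h : s ≤ t) (hφ : IsPolyR s φ) :
    IsPolyR t φ := by
  obtain ⟨p, hc, hev⟩ := hφ
  exact ⟨p, fun n hn => hc n (by omega), hev⟩

lemma IsPolyR.mul' {s t : ℤ} {φ ψ : ℝ → ℝ} (hφ : IsPolyR s φ) (hψ : IsPolyR t ψ) :
    IsPolyR (s + t) (fun x => φ x * ψ x) := by
  obtain ⟨p, hcp, hp⟩ := hφ
  obtain ⟨q, hcq, hq⟩ := hψ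
  refine ⟨p * q, fun n hn => ?_, fun x => by simp [hp, hq]⟩
  rw [Polynomial.coeff_mul]
  refine Finset.sum_eq_zero fun ij hij => ?_
  rw [Finset.HasAntidiagonal.mem_antidiagonal] at hij
  rcases lt_or_ge (s : ℤ) (ij.1 : ℤ) with h | h
  · simp [hcp _ h]
  · have : (t : ℤ) < (ij.2 : ℤ) := by
      have : (ij.1 : ℤ) + (ij.2 : ℤ) = (n : ℤ) := by exact_mod_cast congrArg (Nat.cast) hij
      omega
    simp [hcq _ this]

lemma IsPolyR.continuous' {s : ℤ} {φ : ℝ → ℝ} (hφ : IsPolyR s φ) : Continuous φ := by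
  obtain ⟨p, -, hp⟩ := hφ
  have : φ = fun x => p.eval x := funext hp
  rw [this]
  exact p.continuous

/-- Lemma 4.13, first part: lower bounds for `r^𝓘_{ℐ,i}`.
`Q` is the local integrator `I_n[·]` and `Op` the local approximation operator `ℐ_n`.
The first conjunct is the unconditional bound `r^𝓘_{ℐ,i} ≥ r_ℐ`; the second gives
`r^𝓘_{ℐ,i} ≥ max{r_ℐ, min{r_ex^𝓘 − i, r^int_{ℐ,i}}}` under Assumption A6. -/
theorem stmt_14 (i : ℕ) (a b : ℝ) (hab : a < b)
    (Q : (ℝ → ℝ) →ₗ[ℝ] ℝ) (Op : (ℝ → ℝ) →ₗ[ℝ] (ℝ → ℝ))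
    (rI ρex σ : ℤ)
    (hrep : ∀ φ : ℝ → ℝ, IsPolyR rI φ → Op φ = φ) :
    (∀ φ : ℝ → ℝ, IsPolyR rI φ → ∀ ψ : ℝ → ℝ, IsPolyR (i : ℤ) ψ →
      Q (fun x => φ x * ψ x) = Q (fun x => Op φ x * ψ x)) ∧
    ((∀ (s : ℤ) (φ : ℝ → ℝ), IsPolyR s φ → IsPolyR rI (Op φ)) →
     (∀ φ : ℝ → ℝ, IsPolyR ρex φ → (∫ x in Ioc a b, φ x) = Q φ) →
     (∀ φ : ℝ → ℝ, IsPolyR σ φ → ∀ ψ : ℝ → ℝ, IsPolyR (i : ℤ) ψ →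
        (∫ x in Ioc a b, (φ x - Op φ x) * ψ x) = 0) →
     ∀ m : ℤ, m ≤ max rI (min (ρex - (i : ℤ)) σ) →
     ∀ φ : ℝ → ℝ, IsPolyR m φ → ∀ ψ : ℝ → ℝ, IsPolyR (i : ℤ) ψ →
       Q (fun x => φ x * ψ x) = Q (fun x => Op φ x * ψ x)) := by
  constructor
  · intro φ hφ ψ hψ
    rw [hrep φ hφ]
  · intro hA6 hquad horth m hm φ hφ ψ hψ
    rcases le_or_gt m rI with h | h
    · rw [hrep φ (hφ.mono' h)]
    · have hm2 : m ≤ min (ρex - (i : ℤ)) σ := by omega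
      have hφψ : IsPolyR ρex (fun x => φ x * ψ x) :=
        (hφ.mul' hψ).mono' (by omega)
      have hOp : IsPolyR rI (Op φ) := hA6 m φ hφ
      have hOpψ : IsPolyR ρex (fun x => Op φ x * ψ x) :=
        (hOp.mul' hψ).mono' (by omega)
      rw [← hquad _ hφψ, ← hquad _ hOpψ]
      have h0 := horth φ (hφ.mono' (by omega)) ψ hψ
      have hint1 : IntegrableOn (fun x => φ x * ψ x) (Ioc a b) volume :=
        (hφψ.continuous').integrableOn_Ioc
      have hint2 : IntegrableOn (fun x => Op φ x * ψ x) (Ioc a b) volume :=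
        (hOpψ.continuous').integrableOn_Ioc
      have hsub : (∫ x in Ioc a b, (φ x - Op φ x) * ψ x) =
          (∫ x in Ioc a b, φ x * ψ x) - ∫ x in Ioc a b, Op φ x * ψ x := by
        rw [← integral_sub hint1 hint2]
        congr 1
        ext x
        ring
      rw [hsub] at h0
      linarith
end
end

section
/- Let i ∈ ℕ₀ and suppose ℐ = ℐ¹ ∘ ⋯ ∘ ℐˡ is a composition of operators ℐʲ (1 ≤ j ≤ l) on an interval I_n, each of which is a projection onto polynomials of maximal degree r_{ℐʲ} (Assumption A6) and satisfies ∫_{I_n} ℐʲ_n((φ − ℐʲ_nφ)·ψ) dt = 0 for all ψ ∈ P_i(I_n) and all admissible φ (Assumption A7 with parameter i). Then ∫_{I_n} (φ − ℐ_nφ)·ψ dt = 0 for all ψ ∈ P_i(I_n) and all polynomials φ of degree at most min_{j ∈ 𝓜_i ∪ {l}} max{r_{ℐʲ}, r_ex^{ℐʲ} − i}, where 𝓜_i := { j : 1 ≤ j ≤ l−1 and max{r_{ℐʲ}, r_ex^{ℐʲ} − i} < min_{j+1 ≤ m ≤ l} r_{ℐᵐ} }; that is, r^int_{ℐ,i}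 ≥ min_{j ∈ 𝓜_i ∪ {l}} max{r_{ℐʲ}, r_ex^{ℐʲ} − i}. -/
open Set MeasureTheory
open scoped BigOperators RealInnerProductSpace

noncomputable section

lemma polyR_mono {s s' : ℤ} (h : s ≤ s') {φ : ℝ → ℝ} (hφ : IsPolyR s φ) : IsPolyR s' φ := by
  obtain ⟨p, hc, he⟩ := hφ
  exact ⟨p, fun n hn => hc n (lt_of_le_of_lt h hn), he⟩

lemma polyR_sub {s : ℤ} {φ χ : ℝ → ℝ} (hφ : IsPolyR s φ) (hχ : IsPolyR s χ) :
    IsPolyR s (fun x => φ x - χ x) := by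
  obtain ⟨p, hp, hpe⟩ := hφ
  obtain ⟨q, hq, hqe⟩ := hχ
  exact ⟨p - q, fun n hn => by rw [Polynomial.coeff_sub, hp n hn, hq n hn, sub_zero],
    fun x => by simp [hpe x, hqe x]⟩

lemma polyR_mul {s t : ℤ} {φ χ : ℝ → ℝ} (hφ : IsPolyR s φ) (hχ : IsPolyR t χ) :
    IsPolyR (s + t) (fun x => φ x * χ x) := by
  obtain ⟨p, hp, hpe⟩ := hφ
  obtain ⟨q, hq, hqe⟩ := hχ
  refine ⟨p * q, ?_, fun x => by simp [hpe x, hqe x]⟩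
  intro n hn
  rw [Polynomial.coeff_mul]
  apply Finset.sum_eq_zero
  intro ab hab
  rw [Finset.HasAntidiagonal.mem_antidiagonal] at hab
  have hcast : (ab.1 : ℤ) + (ab.2 : ℤ) = (n : ℤ) := by exact_mod_cast hab
  rcases lt_or_ge s (ab.1 : ℤ) with h | h
  · rw [hp _ h, zero_mul]
  · have : t < (ab.2 : ℤ) := by omega
    rw [hq _ this, mul_zero]

lemma polyR_contDiff {s : ℤ} {φ : ℝ → ℝ} (h : IsPolyR s φ) : ContDiff ℝ (⊤ : ℕ∞) φ := by
  obtain ⟨p, -, he⟩ := h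
  have hfe : φ = fun x => ∑ k ∈ Finset.range (p.natDegree + 1), p.coeff k * x ^ k :=
    funext fun x => by rw [he x, Polynomial.eval_eq_sum_range]
  rw [hfe]
  exact ContDiff.sum fun k _ => contDiff_const.mul (contDiff_id.pow k)

lemma polyR_integrable {s : ℤ} {φ : ℝ → ℝ} (h : IsPolyR s φ) (a b : ℝ) :
    IntegrableOn φ (Ioc a b) := (polyR_contDiff h).continuous.integrableOn_Ioc

lemma compOps_zero (Ops : Fin 0 → ((ℝ → ℝ) →ₗ[ℝ] (ℝ → ℝ))) (φ : ℝ → ℝ) :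
    compOps 0 Ops φ = φ := by simp [compOps]

lemma compOps_succ (l : ℕ) (Ops : Fin (l + 1) → ((ℝ → ℝ) →ₗ[ℝ] (ℝ → ℝ))) (φ : ℝ → ℝ) :
    compOps (l + 1) Ops φ = Ops 0 (compOps l (fun j => Ops j.succ) φ) := by
  simp [compOps, List.ofFn_succ, Function.comp]

lemma opStep {O : (ℝ → ℝ) →ₗ[ℝ] (ℝ → ℝ)} {r : ℤ}
    (hrep : ∀ φ, IsPolyR r φ → O φ = φ)
    (hinto : ∀ (s : ℤ) φ, IsPolyR s φ → IsPolyR r (O φ))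
    {t : ℤ} {φ : ℝ → ℝ} (hφ : IsPolyR t φ) : IsPolyR t (O φ) := by
  rcases le_or_gt t r with h | h
  · rw [hrep φ (polyR_mono h hφ)]; exact hφ
  · exact polyR_mono h.le (hinto t φ hφ)

lemma compPreserve : ∀ (l : ℕ) (Ops : Fin l → ((ℝ → ℝ) →ₗ[ℝ] (ℝ → ℝ)))
    (rI : Fin l → ℤ),
    (∀ j, ∀ φ, IsPolyR (rI j) φ → Ops j φ = φ) →
    (∀ j, ∀ (s : ℤ) φ, IsPolyR s φ → IsPolyR (rI j) (Ops j φ)) →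
    ∀ (t : ℤ) (φ : ℝ → ℝ), IsPolyR t φ → IsPolyR t (compOps l Ops φ)
  | 0, Ops, rI, _, _, t, φ, hφ => by rw [compOps_zero]; exact hφ
  | (l + 1), Ops, rI, hrep, hinto, t, φ, hφ => by
    rw [compOps_succ]
    exact opStep (hrep 0) (hinto 0)
      (compPreserve l (fun j => Ops j.succ) (fun j => rI j.succ)
        (fun j => hrep j.succ) (fun j => hinto j.succ) t φ hφ)

lemma compInto : ∀ (l : ℕ) (Ops : Fin l → ((ℝ → ℝ) →ₗ[ℝ] (ℝ → ℝ)))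
    (rI : Fin l → ℤ),
    (∀ j, ∀ φ, IsPolyR (rI j) φ → Ops j φ = φ) →
    (∀ j, ∀ (s : ℤ) φ, IsPolyR s φ → IsPolyR (rI j) (Ops j φ)) →
    ∀ (s : ℤ) (φ : ℝ → ℝ), IsPolyR s φ → ∀ j : Fin l, IsPolyR (rI j) (compOps l Ops φ)
  | 0, Ops, rI, _, _, s, φ, hφ, j => j.elim0
  | (l + 1), Ops, rI, hrep, hinto, s, φ, hφ, j => by
    rw [compOps_succ]
    refine Fin.cases ?_ ?_ j
    · exact hinto 0 s _ (compPreserve l _ (fun j => rI j.succ)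
        (fun j => hrep j.succ) (fun j => hinto j.succ) s φ hφ)
    · intro j'
      exact opStep (hrep 0) (hinto 0)
        (compInto l (fun j => Ops j.succ) (fun j => rI j.succ)
          (fun j => hrep j.succ) (fun j => hinto j.succ) s φ hφ j')

lemma sop (i : ℕ) (a b : ℝ) {O : (ℝ → ℝ) →ₗ[ℝ] (ℝ → ℝ)} {r rx : ℤ}
    (hrep : ∀ φ, IsPolyR r φ → O φ = φ)
    (hinto : ∀ (s : ℤ) φ, IsPolyR s φ → IsPolyR r (O φ))
    (hex : ∀ φ : ℝ → ℝ, IsPolyR rx φ →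
      (∫ x in Ioc a b, φ x) = ∫ x in Ioc a b, O φ x)
    (hA7 : ∀ φ : ℝ → ℝ, ContDiff ℝ (⊤ : ℕ∞) φ → ∀ ψ : ℝ → ℝ, IsPolyR (i : ℤ) ψ →
      (∫ x in Ioc a b, O (fun y => (φ y - O φ y) * ψ y) x) = 0)
    {φ : ℝ → ℝ} (hφ : IsPolyR (max r (rx - (i : ℤ))) φ)
    {ψ : ℝ → ℝ} (hψ : IsPolyR (i : ℤ) ψ) :
    (∫ x in Ioc a b, (φ x - O φ x) * ψ x) = 0 := by
  rcases le_or_gt (rx - (i : ℤ)) r with h | h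
  · rw [max_eq_left h] at hφ
    rw [hrep φ hφ]
    simp
  · rw [max_eq_right h.le] at hφ
    have hOφ : IsPolyR (rx - (i : ℤ)) (O φ) := polyR_mono h.le (hinto _ φ hφ)
    have hg : IsPolyR rx (fun x => (φ x - O φ x) * ψ x) := by
      have := polyR_mul (polyR_sub hφ hOφ) hψ
      have he : rx - (i : ℤ) + (i : ℤ) = rx := by ring
      rwa [he] at this
    exact (hex _ hg).trans (hA7 φ (polyR_contDiff hφ) ψ hψ)

lemma mainComp : ∀ (n : ℕ) (Ops : Fin (n + 1) → ((ℝ → ℝ) →ₗ[ℝ] (ℝ → ℝ)))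
    (rI rex : Fin (n + 1) → ℤ) (i : ℕ) (a b : ℝ),
    (∀ j, ∀ φ, IsPolyR (rI j) φ → Ops j φ = φ) →
    (∀ j, ∀ (s : ℤ) φ, IsPolyR s φ → IsPolyR (rI j) (Ops j φ)) →
    (∀ j, ∀ φ : ℝ → ℝ, IsPolyR (rex j) φ →
      (∫ x in Ioc a b, φ x) = ∫ x in Ioc a b, Ops j φ x) →
    (∀ j, ∀ φ : ℝ → ℝ, ContDiff ℝ (⊤ : ℕ∞) φ → ∀ ψ : ℝ → ℝ, IsPolyR (i : ℤ) ψ →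
      (∫ x in Ioc a b, Ops j (fun y => (φ y - Ops j φ y) * ψ y) x) = 0) →
    ∀ φ : ℝ → ℝ,
      (∀ j : Fin (n + 1), (∀ m : Fin (n + 1), j < m →
          max (rI j) (rex j - (i : ℤ)) < rI m) →
        IsPolyR (max (rI j) (rex j - (i : ℤ))) φ) →
      ∀ ψ : ℝ → ℝ, IsPolyR (i : ℤ) ψ →
        (∫ x in Ioc a b, (φ x - compOps (n + 1) Ops φ x) * ψ x) = 0
  | 0, Ops, rI, rex, i, a, b, hrep, hinto, hex, hA7, φ, hφ, ψ, hψ => by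
    have hφ0 : IsPolyR (max (rI 0) (rex 0 - (i : ℤ))) φ :=
      hφ 0 (fun m hm => absurd ((Fin.ext (by omega : m.val = 0) : m = 0) ▸ hm) (lt_irrefl _))
    simp only [compOps_succ, compOps_zero]
    exact sop i a b (hrep 0) (hinto 0) (hex 0) (hA7 0) hφ0 hψ
  | (n + 1), Ops, rI, rex, i, a, b, hrep, hinto, hex, hA7, φ, hφ, ψ, hψ => by
    have hφlast : IsPolyR (max (rI (Fin.last (n + 1)))
        (rex (Fin.last (n + 1)) - (i : ℤ))) φ :=
      hφ (Fin.last (n + 1)) (fun m hm => absurd hm (Fin.le_last m : m ≤ Fin.last (n + 1)).not_gt)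
    have hφt : ∀ j : Fin (n + 1), (∀ m : Fin (n + 1), j < m →
        max (rI j.succ) (rex j.succ - (i : ℤ)) < rI m.succ) →
        IsPolyR (max (rI j.succ) (rex j.succ - (i : ℤ))) φ := by
      intro j hj
      refine hφ j.succ ?_
      intro m hm
      have hm0 : m ≠ 0 := Fin.pos_iff_ne_zero.mp ((Fin.succ_pos j).trans hm)
      obtain ⟨k, rfl⟩ := Fin.eq_succ_of_ne_zero hm0
      exact hj k (Fin.succ_lt_succ_iff.mp hm)
    have hχpoly : IsPolyR (max (rI (Fin.last (n + 1)))
        (rex (Fin.last (n + 1)) - (i : ℤ)))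
        (compOps (n + 1) (fun j => Ops j.succ) φ) :=
      compPreserve (n + 1) _ (fun j => rI j.succ)
        (fun j => hrep j.succ) (fun j => hinto j.succ) _ φ hφlast
    have hχM0 : IsPolyR (max (rI 0) (rex 0 - (i : ℤ)))
        (compOps (n + 1) (fun j => Ops j.succ) φ) := by
      by_cases hc : ∀ m : Fin (n + 2), 0 < m → max (rI 0) (rex 0 - (i : ℤ)) < rI m
      · exact compPreserve (n + 1) _ (fun j => rI j.succ)
          (fun j => hrep j.succ) (fun j => hinto j.succ) _ φ (hφ 0 hc)
      · push_neg at hc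
        obtain ⟨m, hm0, hmle⟩ := hc
        obtain ⟨k, rfl⟩ := Fin.eq_succ_of_ne_zero (Fin.pos_iff_ne_zero.mp hm0)
        exact polyR_mono hmle (compInto (n + 1) _ (fun j => rI j.succ)
          (fun j => hrep j.succ) (fun j => hinto j.succ) _ φ hφlast k)
    have h1 : (∫ x in Ioc a b,
        (φ x - compOps (n + 1) (fun j => Ops j.succ) φ x) * ψ x) = 0 :=
      mainComp n (fun j => Ops j.succ) (fun j => rI j.succ) (fun j => rex j.succ)
        i a b (fun j => hrep j.succ) (fun j => hinto j.succ)
        (fun j => hex j.succ) (fun j => hA7 j.succ) φ hφt ψ hψ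
    have h2 : (∫ x in Ioc a b,
        (compOps (n + 1) (fun j => Ops j.succ) φ x -
          Ops 0 (compOps (n + 1) (fun j => Ops j.succ) φ) x) * ψ x) = 0 :=
      sop i a b (hrep 0) (hinto 0) (hex 0) (hA7 0) hχM0 hψ
    have hOχ : IsPolyR (rI 0) (Ops 0 (compOps (n + 1) (fun j => Ops j.succ) φ)) :=
      hinto 0 _ _ hχpoly
    set s0 : ℤ := max (rI (Fin.last (n + 1))) (rex (Fin.last (n + 1)) - (i : ℤ))
    have int1 : IntegrableOn
        (fun x => (φ x - compOps (n + 1) (fun j => Ops j.succ) φ x) * ψ x)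
        (Ioc a b) :=
      polyR_integrable (polyR_mul (polyR_sub hφlast hχpoly) hψ) a b
    have int2 : IntegrableOn
        (fun x => (compOps (n + 1) (fun j => Ops j.succ) φ x -
          Ops 0 (compOps (n + 1) (fun j => Ops j.succ) φ) x) * ψ x)
        (Ioc a b) :=
      polyR_integrable (polyR_mul (polyR_sub (polyR_mono (le_max_left _ _) hχpoly)
        (polyR_mono (le_max_right s0 (rI 0)) hOχ)) hψ) a b
    calc (∫ x in Ioc a b, (φ x - compOps (n + 2) Ops φ x) * ψ x)
        = ∫ x in Ioc a b,
            ((φ x - compOps (n + 1) (fun j => Ops j.succ) φ x) * ψ x +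
             (compOps (n + 1) (fun j => Ops j.succ) φ x -
               Ops 0 (compOps (n + 1) (fun j => Ops j.succ) φ) x) * ψ x) := by
          refine integral_congr_ae (Filter.Eventually.of_forall fun x => ?_)
          rw [compOps_succ]
          ring
      _ = (∫ x in Ioc a b,
            (φ x - compOps (n + 1) (fun j => Ops j.succ) φ x) * ψ x) +
          ∫ x in Ioc a b,
            (compOps (n + 1) (fun j => Ops j.succ) φ x -
              Ops 0 (compOps (n + 1) (fun j => Ops j.succ) φ) x) * ψ x :=
          integral_add int1 int2
      _ = 0 := by rw [h1, h2, add_zero]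

/-- Lemma 4.13, composition part: for a composition
`ℐ = ℐ¹ ∘ ⋯ ∘ ℐˡ` of operators each satisfying Assumptions A6 and A7 (with parameter
`i`), one has `∫ (φ − ℐφ) ψ = 0` for all `ψ ∈ P_i` and all polynomials `φ` of degree at
most `min_{j ∈ 𝓜_i ∪ {l}} max{r_{ℐʲ}, r_ex^{ℐʲ} − i}`.  The membership
`j ∈ 𝓜_i ∪ {l}` is encoded by the condition `∀ m > j, max{r_{ℐʲ}, r_ex^{ℐʲ} − i} < r_{ℐᵐ}`
(vacuously true for the last index). -/
theorem stmt_15 (i : ℕ) (a b : ℝ) (hab : a < b) (l : ℕ) (hl : 1 ≤ l)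
    (Ops : Fin l → ((ℝ → ℝ) →ₗ[ℝ] (ℝ → ℝ))) (rI rex : Fin l → ℤ)
    (hA6rep : ∀ j : Fin l, ∀ φ : ℝ → ℝ, IsPolyR (rI j) φ → Ops j φ = φ)
    (hA6into : ∀ j : Fin l, ∀ (s : ℤ) (φ : ℝ → ℝ), IsPolyR s φ → IsPolyR (rI j) (Ops j φ))
    (hex : ∀ j : Fin l, ∀ φ : ℝ → ℝ, IsPolyR (rex j) φ →
      (∫ x in Ioc a b, φ x) = ∫ x in Ioc a b, Ops j φ x)
    (hA7 : ∀ j : Fin l, ∀ φ : ℝ → ℝ, ContDiff ℝ (⊤ : ℕ∞) φ →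
      ∀ ψ : ℝ → ℝ, IsPolyR (i : ℤ) ψ →
        (∫ x in Ioc a b, Ops j (fun y => (φ y - Ops j φ y) * ψ y) x) = 0) :
    ∀ φ : ℝ → ℝ,
      (∀ j : Fin l, (∀ m : Fin l, j < m → max (rI j) (rex j - (i : ℤ)) < rI m) →
        IsPolyR (max (rI j) (rex j - (i : ℤ))) φ) →
      ∀ ψ : ℝ → ℝ, IsPolyR (i : ℤ) ψ →
        (∫ x in Ioc a b, (φ x - compOps l Ops φ x) * ψ x) = 0 := by
  obtain ⟨n, rfl⟩ : ∃ n, l = n + 1 := ⟨l - 1, (Nat.succ_pred_eq_of_pos hl).symm⟩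
  exact mainComp n Ops rI rex i a b hA6rep hA6into hex hA7
end
end
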